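/- arXiv:2310.09804 — 5 statements merged into one kernel-verified Lean document; each statement's English description precedes it below -/
import Mathlib

section
/- (Descent Lemma for Byzantine-robust aggregation.) Let x^t, g_i^t (i ∈ 𝒢) and g^t be random vectors with x^{t+1} = x^t − γ g^t, γ > 0, and suppose g^t satisfies the robust-aggregation bound E‖g^t − ḡ^t‖² ≤ cδ · (1/(G(G−1))) Σ_{i,l∈𝒢, i≠l} E‖g_i^t − g_l^t‖², where ḡ^t = (1/G) Σ_{i∈𝒢} g_i^t. Then for every s > 0, with κ = 1 − 8Bcδ(1+s): E[f(x^{t+1})] ≤ E[f(x^t)] − (γκ/2)·E‖∇f(x^t)‖² − (1/(2γ) − L/2)·E‖x^{t+1} − x^t‖² + 4γcδ(1+s)·E[(1/G) Σ_{i∈𝒢} ‖g_i^t − ∇f_i(x^t)‖²] + (γ/2)(1 + s^{−1})·E‖ḡ^t − ∇f(x^t)‖² + 4γcδ(1+s)ζ². -/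
open MeasureTheory Finset InnerProductSpace RealInnerProductSpace

theorem descent_aux' {F : Type*} [NormedAddCommGroup F] [InnerProductSpace ℝ F] [CompleteSpace F]
    (f : F → ℝ) (hf : Differentiable ℝ f) (L : ℝ)
    (hsmooth : ∀ x y, ‖gradient f x - gradient f y‖ ≤ L * ‖x - y‖) (x v : F) :
    f (x + v) ≤ f x + ⟪gradient f x, v⟫_ℝ + L / 2 * ‖v‖ ^ 2 := by
  set h : ℝ → ℝ := fun t => f (x + t • v) - t * ⟪gradient f x, v⟫_ℝ - L * t ^ 2 / 2 * ‖v‖ ^ 2 with hh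
  have hderiv : ∀ t : ℝ, HasDerivAt h
      (⟪gradient f (x + t • v), v⟫_ℝ - ⟪gradient f x, v⟫_ℝ - L * t * ‖v‖ ^ 2) t := by
    intro t
    have h1 : HasDerivAt (fun t : ℝ => x + t • v) v t := by
      simpa using ((hasDerivAt_id t).smul_const v).const_add x
    have h2 : HasFDerivAt f (fderiv ℝ f (x + t • v)) (x + t • v) := (hf _).hasFDerivAt
    have h3 : HasDerivAt (fun t : ℝ => f (x + t • v)) (fderiv ℝ f (x + t • v) v) t :=
      h2.comp_hasDerivAt t h1
    have h4 : fderiv ℝ f (x + t • v) v = ⟪gradient f (x + t • v), v⟫_ℝ := by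
      have := (hf (x + t • v)).hasGradientAt
      rw [hasGradientAt_iff_hasFDerivAt] at this
      rw [this.fderiv, InnerProductSpace.toDual_apply_apply]
    rw [h4] at h3
    have h5 : HasDerivAt (fun t : ℝ => t * ⟪gradient f x, v⟫_ℝ) ⟪gradient f x, v⟫_ℝ t := by
      simpa using (hasDerivAt_id t).mul_const ⟪gradient f x, v⟫_ℝ
    have h6 : HasDerivAt (fun t : ℝ => L * t ^ 2 / 2 * ‖v‖ ^ 2) (L * t * ‖v‖ ^ 2) t := by
      have h7 : HasDerivAt (fun t : ℝ => t ^ 2) (2 * t) t := by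
        simpa using hasDerivAt_pow 2 t
      have h8 := ((h7.const_mul L).div_const 2).mul_const (‖v‖ ^ 2)
      have e : L * t * ‖v‖ ^ 2 = L * (2 * t) / 2 * ‖v‖ ^ 2 := by ring
      rw [e]; exact h8
    exact (h3.sub h5).sub h6
  have hanti : AntitoneOn h (Set.Icc (0:ℝ) 1) := by
    apply antitoneOn_of_deriv_nonpos (convex_Icc 0 1)
    · exact fun t _ => ((hderiv t).continuousAt).continuousWithinAt
    · exact fun t _ => ((hderiv t).differentiableAt).differentiableWithinAt
    · intro t ht
      rw [interior_Icc] at ht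
      rw [(hderiv t).deriv]
      have hb : ⟪gradient f (x + t • v) - gradient f x, v⟫_ℝ ≤ L * t * ‖v‖ ^ 2 := by
        calc ⟪gradient f (x + t • v) - gradient f x, v⟫_ℝ
            ≤ ‖gradient f (x + t • v) - gradient f x‖ * ‖v‖ := real_inner_le_norm _ _
          _ ≤ (L * ‖(x + t • v) - x‖) * ‖v‖ :=
              mul_le_mul_of_nonneg_right (hsmooth _ _) (norm_nonneg v)
          _ = L * t * ‖v‖ ^ 2 := by
              rw [add_sub_cancel_left, norm_smul]
              simp [abs_of_pos ht.1]
              ring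
      rw [inner_sub_left] at hb
      linarith
  have hmono := hanti (Set.left_mem_Icc.2 zero_le_one) (Set.right_mem_Icc.2 zero_le_one) zero_le_one
  simp only [hh, one_smul, zero_smul, add_zero, one_pow, zero_pow, one_mul, zero_mul] at hmono
  norm_num at hmono
  have h0 : fderiv ℝ f x v = ⟪gradient f x, v⟫_ℝ := by
    have := (hf x).hasGradientAt
    rw [hasGradientAt_iff_hasFDerivAt] at this
    rw [this.fderiv, InnerProductSpace.toDual_apply_apply]
  linarith

theorem sum_offDiag_pair' {ι : Type*} [Fintype ι] [DecidableEq ι] (φ : ι → ℝ) :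
    ∑ q ∈ Finset.univ.offDiag, (φ q.1 + φ q.2)
      = 2 * ((Fintype.card ι : ℝ) - 1) * ∑ i, φ i := by
  have h1 : ∑ q ∈ (Finset.univ : Finset ι).diag, (φ q.1 + φ q.2)
      + ∑ q ∈ (Finset.univ : Finset ι).offDiag, (φ q.1 + φ q.2)
      = ∑ q ∈ (Finset.univ ×ˢ Finset.univ : Finset (ι × ι)), (φ q.1 + φ q.2) := by
    rw [← Finset.sum_union (Finset.disjoint_diag_offDiag _), Finset.diag_union_offDiag]
  rw [Finset.sum_diag, Finset.sum_product] at h1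
  simp only [Finset.sum_add_distrib, Finset.sum_const, Finset.card_univ, nsmul_eq_mul,
    ← Finset.mul_sum] at h1
  rw [Finset.sum_add_distrib]
  linarith

theorem sq_add_four_le' (a b c e : ℝ) : (a + b + c + e)^2 ≤ 4*(a^2 + b^2 + c^2 + e^2) := by
  nlinarith [sq_nonneg (a-b), sq_nonneg (a-c), sq_nonneg (a-e), sq_nonneg (b-c),
    sq_nonneg (b-e), sq_nonneg (c-e)]

set_option maxHeartbeats 1000000 in
/-- Descent Lemma for Byzantine-robust aggregation. -/
theorem descent_lemma_robust_aggregation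
    {d : ℕ} {ι : Type*} [Fintype ι] [DecidableEq ι]
    (hG : 2 ≤ Fintype.card ι)
    -- local loss functions and their average
    (fS : ι → EuclideanSpace ℝ (Fin d) → ℝ)
    (f : EuclideanSpace ℝ (Fin d) → ℝ)
    (hf : ∀ x, f x = (1 / (Fintype.card ι : ℝ)) * ∑ i, fS i x)
    (hdiff : ∀ i, Differentiable ℝ (fS i))
    -- L-smoothness of f
    (L : ℝ) (hL : 0 ≤ L)
    (hsmooth : ∀ x y, ‖gradient f x - gradient f y‖ ≤ L * ‖x - y‖)
    -- (B, ζ²)-heterogeneity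
    (B ζ : ℝ) (hB : 0 ≤ B) (hζ : 0 ≤ ζ)
    (hhet : ∀ x, (1 / (Fintype.card ι : ℝ)) *
        ∑ i, ‖gradient (fS i) x - gradient f x‖ ^ 2
      ≤ B * ‖gradient f x‖ ^ 2 + ζ ^ 2)
    -- constants
    (c δ γ s : ℝ) (hc : 0 < c) (hδ0 : 0 ≤ δ) (hδ : δ < 1 / 2) (hγ : 0 < γ) (hs : 0 < s)
    -- underlying probability space and random vectors
    {Ω : Type*} [MeasurableSpace Ω] (μ : Measure Ω) [IsProbabilityMeasure μ]
    (xt : Ω → EuclideanSpace ℝ (Fin d))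
    (g : ι → Ω → EuclideanSpace ℝ (Fin d))
    (gt : Ω → EuclideanSpace ℝ (Fin d))
    (xt1 : Ω → EuclideanSpace ℝ (Fin d))
    (hstep : ∀ ω, xt1 ω = xt ω - γ • gt ω)
    -- robust aggregation bound
    (hagg : ∫ ω, ‖gt ω - (Fintype.card ι : ℝ)⁻¹ • ∑ i, g i ω‖ ^ 2 ∂μ
      ≤ c * δ * ((1 / ((Fintype.card ι : ℝ) * ((Fintype.card ι : ℝ) - 1))) *
          ∑ q ∈ Finset.univ.offDiag, ∫ ω, ‖g q.1 ω - g q.2 ω‖ ^ 2 ∂μ))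
    -- integrability of all relevant quantities
    (hint1 : Integrable (fun ω => f (xt1 ω)) μ)
    (hint2 : Integrable (fun ω => f (xt ω)) μ)
    (hint3 : Integrable (fun ω => ‖gradient f (xt ω)‖ ^ 2) μ)
    (hint4 : Integrable (fun ω => ‖xt1 ω - xt ω‖ ^ 2) μ)
    (hint5 : ∀ i, Integrable (fun ω => ‖g i ω - gradient (fS i) (xt ω)‖ ^ 2) μ)
    (hint6 : Integrable
      (fun ω => ‖(Fintype.card ι : ℝ)⁻¹ • ∑ i, g i ω - gradient f (xt ω)‖ ^ 2) μ)
    (hint7 : ∀ i l : ι, Integrable (fun ω => ‖g i ω - g l ω‖ ^ 2) μ)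
    (hint8 : Integrable
      (fun ω => ‖gt ω - (Fintype.card ι : ℝ)⁻¹ • ∑ i, g i ω‖ ^ 2) μ) :
    ∫ ω, f (xt1 ω) ∂μ
      ≤ ∫ ω, f (xt ω) ∂μ
        - (γ * (1 - 8 * B * c * δ * (1 + s)) / 2) *
            ∫ ω, ‖gradient f (xt ω)‖ ^ 2 ∂μ
        - (1 / (2 * γ) - L / 2) * ∫ ω, ‖xt1 ω - xt ω‖ ^ 2 ∂μ
        + 4 * γ * c * δ * (1 + s) *
            ∫ ω, (1 / (Fintype.card ι : ℝ)) *
              ∑ i, ‖g i ω - gradient (fS i) (xt ω)‖ ^ 2 ∂μ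
        + (γ / 2) * (1 + s⁻¹) *
            ∫ ω, ‖(Fintype.card ι : ℝ)⁻¹ • ∑ i, g i ω - gradient f (xt ω)‖ ^ 2 ∂μ
        + 4 * γ * c * δ * (1 + s) * ζ ^ 2 := by
  classical
  set G : ℝ := (Fintype.card ι : ℝ) with hGdef
  have hG2 : (2:ℝ) ≤ G := by rw [hGdef]; exact_mod_cast hG
  have hGpos : (0:ℝ) < G := by linarith
  have hG1pos : (0:ℝ) < G - 1 := by linarith
  -- differentiability of f
  have hfd : Differentiable ℝ f := by
    have hfe : f = fun x => (1 / G) * ∑ i, fS i x := funext hf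
    rw [hfe]
    exact (Differentiable.fun_sum fun i _ => hdiff i).const_mul _
  -- pointwise descent inequality
  have hA : ∀ ω, f (xt1 ω) ≤ f (xt ω) - (γ/2) * ‖gradient f (xt ω)‖^2
      - (1/(2*γ) - L/2) * ‖xt1 ω - xt ω‖^2
      + ((γ/2)*(1+s)) * ‖gt ω - G⁻¹ • ∑ i, g i ω‖^2
      + ((γ/2)*(1+s⁻¹)) * ‖G⁻¹ • ∑ i, g i ω - gradient f (xt ω)‖^2 := by
    intro ω
    have hd := descent_aux' f hfd L hsmooth (xt ω) (xt1 ω - xt ω)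
    have hx : xt ω + (xt1 ω - xt ω) = xt1 ω := by abel
    rw [hx] at hd
    have hv : xt1 ω - xt ω = -(γ • gt ω) := by rw [hstep ω]; abel
    have hIP : ⟪gradient f (xt ω), xt1 ω - xt ω⟫_ℝ
        = (γ/2) * ‖gt ω - gradient f (xt ω)‖^2 - (γ/2) * ‖gt ω‖^2
          - (γ/2) * ‖gradient f (xt ω)‖^2 := by
      rw [hv, inner_neg_right, real_inner_smul_right]
      have h2 : ‖gt ω - gradient f (xt ω)‖^2
          = ‖gt ω‖^2 - 2 * ⟪gradient f (xt ω), gt ω⟫_ℝ + ‖gradient f (xt ω)‖^2 := by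
        rw [norm_sub_sq_real, real_inner_comm]
      rw [h2]; ring
    have hVnorm : ‖xt1 ω - xt ω‖^2 = γ^2 * ‖gt ω‖^2 := by
      rw [hv, norm_neg, norm_smul, Real.norm_eq_abs, abs_of_pos hγ, mul_pow]
    have hkey : (1/(2*γ)) * ‖xt1 ω - xt ω‖^2 = (γ/2) * ‖gt ω‖^2 := by
      rw [hVnorm]; field_simp
    have htri : ‖gt ω - gradient f (xt ω)‖
        ≤ ‖gt ω - G⁻¹ • ∑ i, g i ω‖ + ‖G⁻¹ • ∑ i, g i ω - gradient f (xt ω)‖ := by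
      have h3 : gt ω - gradient f (xt ω)
          = (gt ω - G⁻¹ • ∑ i, g i ω) + (G⁻¹ • ∑ i, g i ω - gradient f (xt ω)) := by abel
      rw [h3]; exact norm_add_le _ _
    have hsq : ‖gt ω - gradient f (xt ω)‖^2
        ≤ (‖gt ω - G⁻¹ • ∑ i, g i ω‖ + ‖G⁻¹ • ∑ i, g i ω - gradient f (xt ω)‖)^2 :=
      pow_le_pow_left₀ (norm_nonneg _) htri 2
    have hyoung : (‖gt ω - G⁻¹ • ∑ i, g i ω‖ + ‖G⁻¹ • ∑ i, g i ω - gradient f (xt ω)‖)^2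
        ≤ (1+s) * ‖gt ω - G⁻¹ • ∑ i, g i ω‖^2
          + (1+s⁻¹) * ‖G⁻¹ • ∑ i, g i ω - gradient f (xt ω)‖^2 := by
      set p := ‖gt ω - G⁻¹ • ∑ i, g i ω‖
      set q := ‖G⁻¹ • ∑ i, g i ω - gradient f (xt ω)‖
      rw [← sub_nonneg]
      have h4 : (1+s)*p^2 + (1+s⁻¹)*q^2 - (p+q)^2 = (s*p - q)^2 / s := by
        field_simp; ring
      rw [h4]; exact div_nonneg (sq_nonneg _) hs.le
    have hmulA : (γ/2) * ‖gt ω - gradient f (xt ω)‖^2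
        ≤ (γ/2) * ((1+s) * ‖gt ω - G⁻¹ • ∑ i, g i ω‖^2
          + (1+s⁻¹) * ‖G⁻¹ • ∑ i, g i ω - gradient f (xt ω)‖^2) :=
      mul_le_mul_of_nonneg_left (hsq.trans hyoung) (by linarith)
    rw [hIP] at hd
    linarith [hd, hkey, hmulA]
  -- integrate the descent inequality
  have i3 := hint3.const_mul (γ/2)
  have i4 := hint4.const_mul (1/(2*γ) - L/2)
  have i8 := hint8.const_mul ((γ/2)*(1+s))
  have i6 := hint6.const_mul ((γ/2)*(1+s⁻¹))
  have hcomb : Integrable (fun ω => f (xt ω) - (γ/2) * ‖gradient f (xt ω)‖^2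
      - (1/(2*γ) - L/2) * ‖xt1 ω - xt ω‖^2
      + ((γ/2)*(1+s)) * ‖gt ω - G⁻¹ • ∑ i, g i ω‖^2
      + ((γ/2)*(1+s⁻¹)) * ‖G⁻¹ • ∑ i, g i ω - gradient f (xt ω)‖^2) μ :=
    (((hint2.sub i3).sub i4).add i8).add i6
  have j1 : Integrable (fun ω => f (xt ω) - (γ/2) * ‖gradient f (xt ω)‖^2) μ := hint2.sub i3
  have j2 : Integrable (fun ω => f (xt ω) - (γ/2) * ‖gradient f (xt ω)‖^2
      - (1/(2*γ) - L/2) * ‖xt1 ω - xt ω‖^2) μ := j1.sub i4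
  have j3 : Integrable (fun ω => f (xt ω) - (γ/2) * ‖gradient f (xt ω)‖^2
      - (1/(2*γ) - L/2) * ‖xt1 ω - xt ω‖^2
      + ((γ/2)*(1+s)) * ‖gt ω - G⁻¹ • ∑ i, g i ω‖^2) μ := j2.add i8
  have key := integral_mono hint1 hcomb hA
  rw [integral_add j3 i6, integral_add j2 i8, integral_sub j1 i4, integral_sub hint2 i3,
      integral_const_mul, integral_const_mul, integral_const_mul, integral_const_mul] at key
  -- pointwise bound on the pairwise differences
  have intS : Integrable
      (fun ω => (1/(G*(G-1))) * ∑ q ∈ Finset.univ.offDiag, ‖g q.1 ω - g q.2 ω‖^2) μ :=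
    (integrable_finset_sum _ (fun q _ => hint7 q.1 q.2)).const_mul _
  have intA : Integrable (fun ω => (1/G) * ∑ i, ‖g i ω - gradient (fS i) (xt ω)‖^2) μ :=
    (integrable_finset_sum _ (fun i _ => hint5 i)).const_mul _
  have hBpt : ∀ ω, (1/(G*(G-1))) * ∑ q ∈ Finset.univ.offDiag, ‖g q.1 ω - g q.2 ω‖^2
      ≤ 8 * ((1/G) * ∑ i, ‖g i ω - gradient (fS i) (xt ω)‖^2)
        + (8*B) * ‖gradient f (xt ω)‖^2 + 8 * ζ^2 := by
    intro ω
    set x := xt ω with hxdef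
    set φ : ι → ℝ := fun i => 4 * (‖g i ω - gradient (fS i) x‖^2
      + ‖gradient (fS i) x - gradient f x‖^2) with hφ
    have hterm : ∀ q ∈ (Finset.univ : Finset ι).offDiag,
        ‖g q.1 ω - g q.2 ω‖^2 ≤ φ q.1 + φ q.2 := by
      rintro ⟨i, l⟩ _
      have h1 : g i ω - g l ω = (g i ω - gradient (fS i) x)
          + (gradient (fS i) x - gradient f x)
          + (gradient f x - gradient (fS l) x) + (gradient (fS l) x - g l ω) := by abel
      have h2 : ‖g i ω - g l ω‖ ≤ ‖g i ω - gradient (fS i) x‖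
          + ‖gradient (fS i) x - gradient f x‖
          + ‖gradient f x - gradient (fS l) x‖ + ‖gradient (fS l) x - g l ω‖ := by
        rw [h1]
        exact le_trans (norm_add_le _ _) (add_le_add_left (le_trans (norm_add_le _ _)
          (add_le_add_left (norm_add_le _ _) _)) _)
      have h3 := pow_le_pow_left₀ (norm_nonneg _) h2 2
      rw [norm_sub_rev (gradient f x) (gradient (fS l) x),
        norm_sub_rev (gradient (fS l) x) (g l ω)] at h3
      have h4 := sq_add_four_le' ‖g i ω - gradient (fS i) x‖ ‖gradient (fS i) x - gradient f x‖
        ‖gradient (fS l) x - gradient f x‖ ‖g l ω - gradient (fS l) x‖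
      simp only [hφ]
      calc ‖g i ω - g l ω‖^2 ≤ _ := h3
        _ ≤ _ := h4
        _ = 4 * (‖g i ω - gradient (fS i) x‖^2 + ‖gradient (fS i) x - gradient f x‖^2)
            + 4 * (‖g l ω - gradient (fS l) x‖^2 + ‖gradient (fS l) x - gradient f x‖^2) := by
          ring
    have hsum : ∑ q ∈ (Finset.univ : Finset ι).offDiag, ‖g q.1 ω - g q.2 ω‖^2
        ≤ 2 * (G - 1) * ∑ i, φ i := by
      have h5 := sum_offDiag_pair' φ
      rw [← hGdef] at h5
      calc ∑ q ∈ (Finset.univ : Finset ι).offDiag, ‖g q.1 ω - g q.2 ω‖^2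
          ≤ ∑ q ∈ (Finset.univ : Finset ι).offDiag, (φ q.1 + φ q.2) := Finset.sum_le_sum hterm
        _ = 2 * (G - 1) * ∑ i, φ i := h5
    have hφsum : ∑ i, φ i = 4 * ((∑ i, ‖g i ω - gradient (fS i) x‖^2)
        + ∑ i, ‖gradient (fS i) x - gradient f x‖^2) := by
      simp only [hφ]
      rw [← Finset.sum_add_distrib, ← Finset.mul_sum]
    have hscal : (1/(G*(G-1))) * (2 * (G-1) * ∑ i, φ i)
        = 8 * ((1/G) * ∑ i, ‖g i ω - gradient (fS i) x‖^2)
          + 8 * ((1/G) * ∑ i, ‖gradient (fS i) x - gradient f x‖^2) := by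
      rw [hφsum]
      have hGne : G ≠ 0 := ne_of_gt hGpos
      have hG1ne : G - 1 ≠ 0 := ne_of_gt hG1pos
      field_simp
      ring
    have hhx := hhet x
    have hcoef : (0:ℝ) ≤ 1/(G*(G-1)) := by positivity
    calc (1/(G*(G-1))) * ∑ q ∈ (Finset.univ : Finset ι).offDiag, ‖g q.1 ω - g q.2 ω‖^2
        ≤ (1/(G*(G-1))) * (2 * (G-1) * ∑ i, φ i) := mul_le_mul_of_nonneg_left hsum hcoef
      _ = 8 * ((1/G) * ∑ i, ‖g i ω - gradient (fS i) x‖^2)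
          + 8 * ((1/G) * ∑ i, ‖gradient (fS i) x - gradient f x‖^2) := hscal
      _ ≤ 8 * ((1/G) * ∑ i, ‖g i ω - gradient (fS i) x‖^2)
          + (8*B) * ‖gradient f x‖^2 + 8 * ζ^2 := by linarith
  -- integrate it
  have hRint : Integrable (fun ω => 8 * ((1/G) * ∑ i, ‖g i ω - gradient (fS i) (xt ω)‖^2)
      + (8*B) * ‖gradient f (xt ω)‖^2 + 8*ζ^2) μ :=
    ((intA.const_mul 8).add (hint3.const_mul (8*B))).add (integrable_const _)
  have k1 : Integrable (fun ω => 8 * ((1/G) * ∑ i, ‖g i ω - gradient (fS i) (xt ω)‖^2)) μ :=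
    intA.const_mul 8
  have k2 : Integrable (fun ω => 8 * ((1/G) * ∑ i, ‖g i ω - gradient (fS i) (xt ω)‖^2)
      + (8*B) * ‖gradient f (xt ω)‖^2) μ := k1.add (hint3.const_mul (8*B))
  have hSle := integral_mono intS hRint hBpt
  rw [integral_const_mul (1/(G*(G-1))), integral_finset_sum _ (fun q _ => hint7 q.1 q.2),
      integral_add k2 (integrable_const _), integral_add k1 (hint3.const_mul (8*B)),
      integral_const_mul 8, integral_const_mul (8*B), integral_const] at hSle
  simp only [measure_univ, probReal_univ, ENNReal.toReal_one, smul_eq_mul, one_mul] at hSle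
  -- combine with the aggregation bound
  have hcδ : (0:ℝ) ≤ c * δ := mul_nonneg hc.le hδ0
  have hE8 : ∫ ω, ‖gt ω - G⁻¹ • ∑ i, g i ω‖^2 ∂μ
      ≤ c * δ * (8 * ∫ ω, (1/G) * ∑ i, ‖g i ω - gradient (fS i) (xt ω)‖^2 ∂μ
        + (8*B) * ∫ ω, ‖gradient f (xt ω)‖^2 ∂μ + 8 * ζ^2) :=
    le_trans hagg (mul_le_mul_of_nonneg_left hSle hcδ)
  have hmul := mul_le_mul_of_nonneg_left hE8
    (by nlinarith : (0:ℝ) ≤ (γ/2)*(1+s))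
  linarith [key, hmul]
end

section
/- (One-step recursion for the average local error in Byz-VR-MARINA 2.0.) In the setting where, with probability p, g_i^{t+1} = ∇f_i(x^{t+1}) for all i ∈ 𝒢 and otherwise g_i^{t+1} = g_i^t + 𝒬_i(Δ̂_i(x^{t+1}, x^t)), with 𝒬_i unbiased compressors with variance parameter ω applied conditionally unbiasedly and Δ̂_i conditionally unbiased mini-batch estimators satisfying the local Hessian variance bound, all mutually independent given (x^t, x^{t+1}, {g_i^t}), one has: (1/G) Σ_{i∈𝒢} E‖g_i^{t+1} − ∇f_i(x^{t+1})‖² ≤ (1−p)·((1/G) Σ_{i∈𝒢} E‖g_i^t − ∇f_i(x^t)‖² + (ω(𝓛±²/b + L±² + L²) + 𝓛±²/b)·E‖x^{t+1} − x^t‖²). -/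
open MeasureTheory Finset

section ByzHelpers

variable {Ω E' : Type*} [MeasurableSpace Ω] [NormedAddCommGroup E'] [InnerProductSpace ℝ E']
  [CompleteSpace E']

theorem byz_second_moment (ν : Measure Ω) [IsProbabilityMeasure ν] (h : Ω → E') (m a : E')
    (hint : Integrable h ν) (hint2 : Integrable (fun w => ‖h w - m‖ ^ 2) ν)
    (hm : ∫ w, h w ∂ν = m) :
    Integrable (fun w => ‖a + h w‖ ^ 2) ν ∧
      ∫ w, ‖a + h w‖ ^ 2 ∂ν = ‖a + m‖ ^ 2 + ∫ w, ‖h w - m‖ ^ 2 ∂ν := by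
  have hexp : ∀ w, ‖a + h w‖ ^ 2
      = ‖a + m‖ ^ 2 + (2 * inner ℝ (a + m) (h w - m) + ‖h w - m‖ ^ 2) := by
    intro w
    have : a + h w = (a + m) + (h w - m) := by abel
    rw [this, @norm_add_sq_real]; ring
  have hsub : Integrable (fun w => h w - m) ν := hint.sub (integrable_const m)
  have hinner : Integrable (fun w => 2 * inner ℝ (a + m) (h w - m) : Ω → ℝ) ν :=
    (hsub.const_inner (a + m)).const_mul 2
  have hzero : ∫ w, (2 * inner ℝ (a + m) (h w - m) : ℝ) ∂ν = 0 := by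
    rw [integral_const_mul, integral_inner hsub, integral_sub hint (integrable_const m), hm,
      integral_const]
    simp
  constructor
  · refine ((integrable_const (‖a + m‖ ^ 2)).add (hinner.add hint2)).congr ?_
    exact Filter.Eventually.of_forall fun w => (hexp w).symm
  · calc ∫ w, ‖a + h w‖ ^ 2 ∂ν
        = ∫ w, (‖a + m‖ ^ 2 + (2 * inner ℝ (a + m) (h w - m) + ‖h w - m‖ ^ 2)) ∂ν := by
          exact integral_congr_ae (Filter.Eventually.of_forall hexp)
      _ = ‖a + m‖ ^ 2 + ∫ w, ‖h w - m‖ ^ 2 ∂ν := by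
          have h12 : Integrable
              (fun w => 2 * inner ℝ (a + m) (h w - m) + ‖h w - m‖ ^ 2 : Ω → ℝ) ν :=
            hinner.add hint2
          rw [integral_add (integrable_const _) h12, integral_add hinner hint2,
            integral_const, hzero]
          simp

theorem byz_integral_bool (μ : Measure Bool) [IsFiniteMeasure μ] (h : Bool → ℝ) :
    ∫ c, h c ∂μ = (μ {true}).toReal * h true + (μ {false}).toReal * h false := by
  rw [integral_fintype .of_finite]
  simp [mul_comm, measureReal_def]

theorem byz_pi_map_eval {ι : Type*} [Fintype ι] {Ω : ι → Type*} [∀ i, MeasurableSpace (Ω i)]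
    (ν : ∀ i, Measure (Ω i)) [∀ i, IsProbabilityMeasure (ν i)] (i : ι) :
    (Measure.pi ν).map (Function.eval i) = ν i := by
  classical
  ext s hs
  rw [Measure.map_apply (measurable_pi_apply i) hs, Set.eval_preimage, Measure.pi_pi]
  rw [Finset.prod_eq_single i]
  · simp
  · intro j _ hj; simp [Function.update_of_ne hj]
  · simp

theorem byz_gradient_measurable {d : ℕ} (f : EuclideanSpace ℝ (Fin d) → ℝ) :
    Measurable (gradient f) := by
  have : gradient f = fun x => (InnerProductSpace.toDual ℝ _).symm (fderiv ℝ f x) := rfl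
  rw [this]
  exact (InnerProductSpace.toDual ℝ _).symm.continuous.measurable.comp (measurable_fderiv ℝ f)

end ByzHelpers

set_option maxHeartbeats 1000000 in
/-- One-step recursion for the mean gradient estimator in Byz-VR-MARINA 2.0. -/
theorem local_error_recursion_byz_vr_marina2
    {d : ℕ} {ι : Type*} [Fintype ι]
    -- local loss functions and their average
    (fS : ι → EuclideanSpace ℝ (Fin d) → ℝ)
    (f : EuclideanSpace ℝ (Fin d) → ℝ)
    (hf : ∀ x, f x = (1 / (Fintype.card ι : ℝ)) * ∑ i, fS i x)
    (hdiff : ∀ i, Differentiable ℝ (fS i))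
    -- L-smoothness of f
    (L : ℝ) (hL : 0 ≤ L)
    (hsmooth : ∀ x y, ‖gradient f x - gradient f y‖ ≤ L * ‖x - y‖)
    -- global Hessian variance
    (Lpm : ℝ) (hLpm : 0 ≤ Lpm)
    (hGH : ∀ x y, (1 / (Fintype.card ι : ℝ)) *
          ∑ i, ‖gradient (fS i) x - gradient (fS i) y‖ ^ 2
        - ‖gradient f x - gradient f y‖ ^ 2
      ≤ Lpm ^ 2 * ‖x - y‖ ^ 2)
    -- probability of full-gradient synchronization
    (p : ℝ) (hp0 : 0 < p) (hp1 : p ≤ 1)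
    -- past randomness
    {Ω₀ : Type*} [MeasurableSpace Ω₀] (μ₀ : Measure Ω₀) [IsProbabilityMeasure μ₀]
    -- coin randomness
    (μc : Measure Bool) [IsProbabilityMeasure μc]
    (hcoin : μc {true} = ENNReal.ofReal p)
    -- mini-batch estimator randomness (independent across workers)
    {Ωb : ι → Type*} [∀ i, MeasurableSpace (Ωb i)]
    (νb : ∀ i, Measure (Ωb i)) [∀ i, IsProbabilityMeasure (νb i)]
    -- compressor randomness (independent across workers)
    {Ωq : ι → Type*} [∀ i, MeasurableSpace (Ωq i)]
    (νq : ∀ i, Measure (Ωq i)) [∀ i, IsProbabilityMeasure (νq i)]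
    -- mini-batch estimators: conditionally unbiased, local Hessian variance with batch size b
    (Dhat : (i : ι) → EuclideanSpace ℝ (Fin d) → EuclideanSpace ℝ (Fin d) →
      Ωb i → EuclideanSpace ℝ (Fin d))
    (hDmeas : ∀ i, Measurable fun q :
        (EuclideanSpace ℝ (Fin d) × EuclideanSpace ℝ (Fin d)) × Ωb i =>
        Dhat i q.1.1 q.1.2 q.2)
    (hDint : ∀ i x y, Integrable (fun wb => Dhat i x y wb) (νb i))
    (hDint2 : ∀ i x y, Integrable
      (fun wb => ‖Dhat i x y wb - (gradient (fS i) x - gradient (fS i) y)‖ ^ 2) (νb i))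
    (hDunbiased : ∀ i x y,
      ∫ wb, Dhat i x y wb ∂(νb i) = gradient (fS i) x - gradient (fS i) y)
    (b Lloc : ℝ) (hb : 0 < b) (hLloc : 0 ≤ Lloc)
    (hlocal : ∀ x y, (1 / (Fintype.card ι : ℝ)) *
        ∑ i, ∫ wb, ‖Dhat i x y wb - (gradient (fS i) x - gradient (fS i) y)‖ ^ 2 ∂(νb i)
      ≤ (Lloc ^ 2 / b) * ‖x - y‖ ^ 2)
    -- unbiased compressors with variance parameter ω
    (omg : ℝ) (homg : 0 ≤ omg)
    (Q : (i : ι) → EuclideanSpace ℝ (Fin d) → Ωq i → EuclideanSpace ℝ (Fin d))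
    (hQmeas : ∀ i, Measurable fun q : EuclideanSpace ℝ (Fin d) × Ωq i => Q i q.1 q.2)
    (hQint : ∀ i z, Integrable (fun wq => Q i z wq) (νq i))
    (hQint2 : ∀ i z, Integrable (fun wq => ‖Q i z wq - z‖ ^ 2) (νq i))
    (hQunbiased : ∀ i z, ∫ wq, Q i z wq ∂(νq i) = z)
    (hQvar : ∀ i z, ∫ wq, ‖Q i z wq - z‖ ^ 2 ∂(νq i) ≤ omg * ‖z‖ ^ 2)
    -- current iterates (measurable with respect to the past)
    (xt xt1 : Ω₀ → EuclideanSpace ℝ (Fin d))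
    (gt : ι → Ω₀ → EuclideanSpace ℝ (Fin d))
    (hxtm : Measurable xt) (hxt1m : Measurable xt1) (hgtm : ∀ i, Measurable (gt i))
    -- the new local estimators: with probability p send full gradients,
    -- otherwise add a compressed stochastic gradient difference
    (gt1 : ι → Ω₀ × Bool × (∀ i, Ωb i) × (∀ i, Ωq i) → EuclideanSpace ℝ (Fin d))
    (hgt1 : ∀ i w, gt1 i w =
      if w.2.1 then gradient (fS i) (xt1 w.1)
      else gt i w.1 + Q i (Dhat i (xt1 w.1) (xt w.1) (w.2.2.1 i)) (w.2.2.2 i))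
    -- integrability of the relevant squared norms
    (hint1 : ∀ i, Integrable
      (fun w : Ω₀ × Bool × (∀ i, Ωb i) × (∀ i, Ωq i) =>
        ‖gt1 i w - gradient (fS i) (xt1 w.1)‖ ^ 2)
      (μ₀.prod (μc.prod ((Measure.pi νb).prod (Measure.pi νq)))))
    (hint2 : ∀ i, Integrable
      (fun ω₀ => ‖gt i ω₀ - gradient (fS i) (xt ω₀)‖ ^ 2) μ₀)
    (hint3 : Integrable (fun ω₀ => ‖xt1 ω₀ - xt ω₀‖ ^ 2) μ₀) :
    (1 / (Fintype.card ι : ℝ)) *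
        ∑ i, ∫ w, ‖gt1 i w - gradient (fS i) (xt1 w.1)‖ ^ 2
          ∂(μ₀.prod (μc.prod ((Measure.pi νb).prod (Measure.pi νq))))
      ≤ (1 - p) *
        ((1 / (Fintype.card ι : ℝ)) *
            ∑ i, ∫ ω₀, ‖gt i ω₀ - gradient (fS i) (xt ω₀)‖ ^ 2 ∂μ₀
          + (omg * (Lloc ^ 2 / b + Lpm ^ 2 + L ^ 2) + Lloc ^ 2 / b) *
            ∫ ω₀, ‖xt1 ω₀ - xt ω₀‖ ^ 2 ∂μ₀) := by
  classical
  have hδnn : 0 ≤ ∫ ω₀, ‖xt1 ω₀ - xt ω₀‖ ^ 2 ∂μ₀ := integral_nonneg fun _ => sq_nonneg _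
  have hc0nn : 0 ≤ omg * (Lloc ^ 2 / b + Lpm ^ 2 + L ^ 2) + Lloc ^ 2 / b := by
    have h1 : 0 ≤ Lloc ^ 2 / b := div_nonneg (sq_nonneg _) hb.le
    nlinarith [sq_nonneg L, sq_nonneg Lpm]
  -- trivial case: empty index set
  rcases isEmpty_or_nonempty ι with hι | hι
  · simp only [univ_eq_empty, sum_empty, mul_zero, zero_add]
    exact mul_nonneg (by linarith) (mul_nonneg hc0nn hδnn)
  have hG : (0:ℝ) < (Fintype.card ι : ℝ) := by
    exact_mod_cast Fintype.card_pos
  have hcompl : ({true}ᶜ : Set Bool) = {false} := by ext c; cases c <;> simp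
  set ρ : Measure ((∀ i, Ωb i) × (∀ i, Ωq i)) := (Measure.pi νb).prod (Measure.pi νq) with hρ
  -- trivial case: p = 1
  by_cases hp : p = 1
  · subst hp
    have hfm : μc {false} = 0 := by
      rw [← hcompl, measure_compl (measurableSet_singleton _) (measure_ne_top _ _),
        measure_univ, hcoin]
      simp
    have hzero : ∀ i, ∫ w, ‖gt1 i w - gradient (fS i) (xt1 w.1)‖ ^ 2
        ∂(μ₀.prod (μc.prod ρ)) = 0 := by
      intro i
      have hSbad : (μ₀.prod (μc.prod ρ)) {w | w.2.1 = false} = 0 := by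
        have hset : {w : Ω₀ × Bool × (∀ j, Ωb j) × (∀ j, Ωq j) | w.2.1 = false}
            = Set.univ ×ˢ (({false} : Set Bool) ×ˢ Set.univ) := by
          ext w
          simp only [Set.mem_setOf_eq, Set.mem_prod, Set.mem_univ, true_and, and_true,
            Set.mem_singleton_iff]
        rw [hset, Measure.prod_prod, Measure.prod_prod, hfm]
        simp
      have hae : ∀ᵐ w ∂(μ₀.prod (μc.prod ρ)), w.2.1 = true := by
        rw [ae_iff]
        have hset2 : {w : Ω₀ × Bool × (∀ j, Ωb j) × (∀ j, Ωq j) | ¬ w.2.1 = true}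
            = {w | w.2.1 = false} := by
          ext w; simp
        rw [hset2]; exact hSbad
      refine integral_eq_zero_of_ae ?_
      filter_upwards [hae] with w hw
      rw [hgt1 i w, if_pos hw]
      simp
    rw [Finset.sum_congr rfl fun i _ => hzero i]
    simp
  -- main case : p < 1
  have hplt : p < 1 := lt_of_le_of_ne hp1 hp
  have hμcF : μc {false} = ENNReal.ofReal (1 - p) := by
    rw [← hcompl, measure_compl (measurableSet_singleton _) (measure_ne_top _ _),
      measure_univ, hcoin, ← ENNReal.ofReal_one, ← ENNReal.ofReal_sub _ hp0.le]
  have hcTr : (μc {true}).toReal = p := by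
    rw [hcoin]; exact ENNReal.toReal_ofReal hp0.le
  have hcFr : (μc {false}).toReal = 1 - p := by
    rw [hμcF]; exact ENNReal.toReal_ofReal (by linarith)
  have hμcFpos : μc {false} ≠ 0 := by
    rw [hμcF]; exact (ENNReal.ofReal_pos.mpr (by linarith)).ne'
  have hgrad : ∀ i : ι, Measurable (gradient (fS i)) := fun i => byz_gradient_measurable (fS i)
  set G : ℝ := (Fintype.card ι : ℝ) with hGdef
  set V : ι → Ω₀ → ℝ := fun i ω₀ => ∫ u, ‖Dhat i (xt1 ω₀) (xt ω₀) u -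
      (gradient (fS i) (xt1 ω₀) - gradient (fS i) (xt ω₀))‖ ^ 2 ∂(νb i) with hV
  set W : ι → Ω₀ → ℝ := fun i ω₀ =>
      ‖gradient (fS i) (xt1 ω₀) - gradient (fS i) (xt ω₀)‖ ^ 2 with hW
  set B : ι → Ω₀ → ℝ := fun i ω₀ => ‖gt i ω₀ - gradient (fS i) (xt ω₀)‖ ^ 2
      + (1 + omg) * V i ω₀ + omg * W i ω₀ with hB
  -- pointwise facts
  have hVnn : ∀ i ω₀, 0 ≤ V i ω₀ := fun i ω₀ => integral_nonneg fun u => sq_nonneg _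
  have hWnn : ∀ i ω₀, 0 ≤ W i ω₀ := fun i ω₀ => sq_nonneg _
  have hVsum : ∀ ω₀, ∑ i, V i ω₀ ≤ G * ((Lloc ^ 2 / b) * ‖xt1 ω₀ - xt ω₀‖ ^ 2) := by
    intro ω₀
    have h1 := hlocal (xt1 ω₀) (xt ω₀)
    have h2 : ∑ i, V i ω₀ = G * ((1 / G) * ∑ i, V i ω₀) := by field_simp
    rw [h2]
    exact mul_le_mul_of_nonneg_left h1 hG.le
  have hWsum : ∀ ω₀, ∑ i, W i ω₀ ≤ G * ((Lpm ^ 2 + L ^ 2) * ‖xt1 ω₀ - xt ω₀‖ ^ 2) := by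
    intro ω₀
    have h1 := hGH (xt1 ω₀) (xt ω₀)
    have hfsq : ‖gradient f (xt1 ω₀) - gradient f (xt ω₀)‖ ^ 2
        ≤ L ^ 2 * ‖xt1 ω₀ - xt ω₀‖ ^ 2 := by
      calc ‖gradient f (xt1 ω₀) - gradient f (xt ω₀)‖ ^ 2
          ≤ (L * ‖xt1 ω₀ - xt ω₀‖) ^ 2 :=
            pow_le_pow_left₀ (norm_nonneg _) (hsmooth (xt1 ω₀) (xt ω₀)) 2
        _ = L ^ 2 * ‖xt1 ω₀ - xt ω₀‖ ^ 2 := by rw [mul_pow]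
    have h3 : (1 / G) * ∑ i, W i ω₀ ≤ (Lpm ^ 2 + L ^ 2) * ‖xt1 ω₀ - xt ω₀‖ ^ 2 := by
      simp only [hW]
      nlinarith [h1, hfsq]
    have h2 : ∑ i, W i ω₀ = G * ((1 / G) * ∑ i, W i ω₀) := by field_simp
    rw [h2]
    exact mul_le_mul_of_nonneg_left h3 hG.le
  have hVle : ∀ i ω₀, V i ω₀ ≤ G * ((Lloc ^ 2 / b) * ‖xt1 ω₀ - xt ω₀‖ ^ 2) := fun i ω₀ =>
    le_trans (Finset.single_le_sum (fun j _ => hVnn j ω₀) (mem_univ i)) (hVsum ω₀)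
  have hWle : ∀ i ω₀, W i ω₀ ≤ G * ((Lpm ^ 2 + L ^ 2) * ‖xt1 ω₀ - xt ω₀‖ ^ 2) := fun i ω₀ =>
    le_trans (Finset.single_le_sum (fun j _ => hWnn j ω₀) (mem_univ i)) (hWsum ω₀)
  -- measurability of V and W
  have hWm : ∀ i, Measurable (W i) := by
    intro i
    rw [hW]
    exact (((hgrad i).comp hxt1m).sub ((hgrad i).comp hxtm)).norm.pow_const 2
  have hVm : ∀ i, Measurable (V i) := by
    intro i
    rw [hV]
    have hF : StronglyMeasurable (fun z : Ω₀ × Ωb i =>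
        ‖Dhat i (xt1 z.1) (xt z.1) z.2 -
          (gradient (fS i) (xt1 z.1) - gradient (fS i) (xt z.1))‖ ^ 2) := by
      have hD : Measurable (fun z : Ω₀ × Ωb i => Dhat i (xt1 z.1) (xt z.1) z.2) :=
        (hDmeas i).comp ((((hxt1m.comp measurable_fst).prodMk
          (hxtm.comp measurable_fst))).prodMk measurable_snd)
      have hg1 : Measurable (fun z : Ω₀ × Ωb i => gradient (fS i) (xt1 z.1)) :=
        (hgrad i).comp (hxt1m.comp measurable_fst)
      have hg2 : Measurable (fun z : Ω₀ × Ωb i => gradient (fS i) (xt z.1)) :=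
        (hgrad i).comp (hxtm.comp measurable_fst)
      exact ((hD.sub (hg1.sub hg2)).norm.pow_const 2).stronglyMeasurable
    exact hF.integral_prod_right'.measurable
  -- integrability over μ₀
  have hVint : ∀ i, Integrable (V i) μ₀ := by
    intro i
    refine Integrable.mono' (hint3.const_mul (G * (Lloc ^ 2 / b)))
      (hVm i).aestronglyMeasurable ?_
    refine Filter.Eventually.of_forall fun ω₀ => ?_
    rw [Real.norm_eq_abs, abs_of_nonneg (hVnn i ω₀)]
    calc V i ω₀ ≤ G * ((Lloc ^ 2 / b) * ‖xt1 ω₀ - xt ω₀‖ ^ 2) := hVle i ω₀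
      _ = G * (Lloc ^ 2 / b) * ‖xt1 ω₀ - xt ω₀‖ ^ 2 := by ring
  have hWint : ∀ i, Integrable (W i) μ₀ := by
    intro i
    refine Integrable.mono' (hint3.const_mul (G * (Lpm ^ 2 + L ^ 2)))
      (hWm i).aestronglyMeasurable ?_
    refine Filter.Eventually.of_forall fun ω₀ => ?_
    rw [Real.norm_eq_abs, abs_of_nonneg (hWnn i ω₀)]
    calc W i ω₀ ≤ G * ((Lpm ^ 2 + L ^ 2) * ‖xt1 ω₀ - xt ω₀‖ ^ 2) := hWle i ω₀
      _ = G * (Lpm ^ 2 + L ^ 2) * ‖xt1 ω₀ - xt ω₀‖ ^ 2 := by ring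
  have hBint : ∀ i, Integrable (B i) μ₀ := by
    intro i
    rw [hB]
    exact ((hint2 i).add ((hVint i).const_mul (1 + omg))).add ((hWint i).const_mul omg)
  -- the key one-worker estimate
  have claim1 : ∀ i, ∫ w, ‖gt1 i w - gradient (fS i) (xt1 w.1)‖ ^ 2 ∂(μ₀.prod (μc.prod ρ))
      ≤ (1 - p) * ∫ ω₀, B i ω₀ ∂μ₀ := by
    intro i
    have haebound : ∀ᵐ ω₀ ∂μ₀,
        (∫ r, ‖gt1 i (ω₀, r) - gradient (fS i) (xt1 ω₀)‖ ^ 2 ∂(μc.prod ρ))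
          ≤ (1 - p) * B i ω₀ := by
      filter_upwards [(hint1 i).prod_right_ae] with ω₀ hslice
      set a : EuclideanSpace ℝ (Fin d) := gt i ω₀ - gradient (fS i) (xt1 ω₀) with haa
      -- the integrand in the "false" branch, rewritten
      have hrepr : ∀ y : (∀ j, Ωb j) × (∀ j, Ωq j),
          ‖gt1 i (ω₀, (false, y)) - gradient (fS i) (xt1 ω₀)‖ ^ 2
            = ‖a + Q i (Dhat i (xt1 ω₀) (xt ω₀) (y.1 i)) (y.2 i)‖ ^ 2 := by
        intro y
        have habel : ∀ u v w : EuclideanSpace ℝ (Fin d), u + v - w = (u - w) + v :=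
          fun u v w => by abel
        rw [hgt1]
        simp only [Bool.false_eq_true, if_false]
        rw [haa, ← habel]
      -- the "true" branch vanishes
      have htrue0 : ∫ y, ‖gt1 i (ω₀, (true, y)) - gradient (fS i) (xt1 ω₀)‖ ^ 2 ∂ρ = 0 := by
        have hz : ∀ y : (∀ j, Ωb j) × (∀ j, Ωq j),
            ‖gt1 i (ω₀, (true, y)) - gradient (fS i) (xt1 ω₀)‖ ^ 2 = 0 := by
          intro y; rw [hgt1]; simp
        simp only [hz, integral_zero]
      -- integrability of the false branch
      have hfalse_int : Integrable
          (fun y => ‖gt1 i (ω₀, (false, y)) - gradient (fS i) (xt1 ω₀)‖ ^ 2) ρ := by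
        by_contra hcon
        have hbad := MeasureTheory.ae_iff.mp hslice.prod_right_ae
        refine hμcFpos (measure_mono_null ?_ hbad)
        intro c hc
        simp only [Set.mem_singleton_iff] at hc
        subst hc
        simp only [Set.mem_setOf_eq]
        intro hint'
        exact hcon hint'
      -- pushforward to the two relevant coordinates
      have hπm : Measurable (fun y : (∀ j, Ωb j) × (∀ j, Ωq j) => (y.1 i, y.2 i)) :=
        ((measurable_pi_apply i).comp measurable_fst).prodMk
          ((measurable_pi_apply i).comp measurable_snd)
      have hmap : ρ.map (fun y : (∀ j, Ωb j) × (∀ j, Ωq j) => (y.1 i, y.2 i))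
          = (νb i).prod (νq i) := by
        rw [hρ, ← byz_pi_map_eval νb i, ← byz_pi_map_eval νq i,
          Measure.map_prod_map _ _ (measurable_pi_apply i) (measurable_pi_apply i)]
        rfl
      have hφm : Measurable (fun u : Ωb i × Ωq i =>
          ‖a + Q i (Dhat i (xt1 ω₀) (xt ω₀) u.1) u.2‖ ^ 2) := by
        have hzm : Measurable (fun v : Ωb i => Dhat i (xt1 ω₀) (xt ω₀) v) := by
          have hpair : Measurable (fun v : Ωb i =>
              (((xt1 ω₀, xt ω₀), v) :
                (EuclideanSpace ℝ (Fin d) × EuclideanSpace ℝ (Fin d)) × Ωb i)) :=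
            measurable_const.prodMk measurable_id
          exact (hDmeas i).comp hpair
        exact ((measurable_const.add ((hQmeas i).comp
          ((hzm.comp measurable_fst).prodMk measurable_snd))).norm.pow_const 2)
      have K_int : Integrable (fun u : Ωb i × Ωq i =>
          ‖a + Q i (Dhat i (xt1 ω₀) (xt ω₀) u.1) u.2‖ ^ 2) ((νb i).prod (νq i)) := by
        rw [← hmap, integrable_map_measure hφm.aestronglyMeasurable hπm.aemeasurable]
        exact hfalse_int.congr (Filter.Eventually.of_forall fun y => hrepr y)
      have hKmap : ∫ y, ‖gt1 i (ω₀, (false, y)) - gradient (fS i) (xt1 ω₀)‖ ^ 2 ∂ρ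
          = ∫ u, ‖a + Q i (Dhat i (xt1 ω₀) (xt ω₀) u.1) u.2‖ ^ 2 ∂((νb i).prod (νq i)) := by
        calc ∫ y, ‖gt1 i (ω₀, (false, y)) - gradient (fS i) (xt1 ω₀)‖ ^ 2 ∂ρ
            = ∫ y, ‖a + Q i (Dhat i (xt1 ω₀) (xt ω₀) (y.1 i)) (y.2 i)‖ ^ 2 ∂ρ :=
              integral_congr_ae (Filter.Eventually.of_forall hrepr)
          _ = ∫ u, ‖a + Q i (Dhat i (xt1 ω₀) (xt ω₀) u.1) u.2‖ ^ 2
              ∂(ρ.map (fun y : (∀ j, Ωb j) × (∀ j, Ωq j) => (y.1 i, y.2 i))) :=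
              (integral_map hπm.aemeasurable hφm.aestronglyMeasurable).symm
          _ = _ := by rw [hmap]
      -- second-moment decompositions
      have hsmq : ∀ zz : EuclideanSpace ℝ (Fin d),
          Integrable (fun wq => ‖a + Q i zz wq‖ ^ 2) (νq i) ∧
            ∫ wq, ‖a + Q i zz wq‖ ^ 2 ∂(νq i) = ‖a + zz‖ ^ 2 + ∫ wq, ‖Q i zz wq - zz‖ ^ 2 ∂(νq i) :=
        fun zz => byz_second_moment (νq i) (Q i zz) zz a
          (hQint i zz) (hQint2 i zz) (hQunbiased i zz)
      have hDsm := byz_second_moment (νb i) (fun v => Dhat i (xt1 ω₀) (xt ω₀) v)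
        (gradient (fS i) (xt1 ω₀) - gradient (fS i) (xt ω₀)) a
        (hDint i _ _) (hDint2 i _ _) (hDunbiased i _ _)
      have hDsm0 := byz_second_moment (νb i) (fun v => Dhat i (xt1 ω₀) (xt ω₀) v)
        (gradient (fS i) (xt1 ω₀) - gradient (fS i) (xt ω₀)) 0
        (hDint i _ _) (hDint2 i _ _) (hDunbiased i _ _)
      have hz2int : Integrable (fun v => ‖Dhat i (xt1 ω₀) (xt ω₀) v‖ ^ 2) (νb i) :=
        hDsm0.1.congr (Filter.Eventually.of_forall fun v => by simp)
      have hz2val : ∫ v, ‖Dhat i (xt1 ω₀) (xt ω₀) v‖ ^ 2 ∂(νb i)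
          = ‖gradient (fS i) (xt1 ω₀) - gradient (fS i) (xt ω₀)‖ ^ 2 + V i ω₀ := by
        calc ∫ v, ‖Dhat i (xt1 ω₀) (xt ω₀) v‖ ^ 2 ∂(νb i)
            = ∫ v, ‖(0 : EuclideanSpace ℝ (Fin d)) + Dhat i (xt1 ω₀) (xt ω₀) v‖ ^ 2 ∂(νb i) := by
              simp
          _ = ‖(0 : EuclideanSpace ℝ (Fin d)) +
                (gradient (fS i) (xt1 ω₀) - gradient (fS i) (xt ω₀))‖ ^ 2
              + ∫ v, ‖Dhat i (xt1 ω₀) (xt ω₀) v -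
                (gradient (fS i) (xt1 ω₀) - gradient (fS i) (xt ω₀))‖ ^ 2 ∂(νb i) := hDsm0.2
          _ = _ := by rw [zero_add]
      have hbound_int : Integrable (fun v => ‖a + Dhat i (xt1 ω₀) (xt ω₀) v‖ ^ 2
          + omg * ‖Dhat i (xt1 ω₀) (xt ω₀) v‖ ^ 2) (νb i) :=
        hDsm.1.add (hz2int.const_mul omg)
      have hKle : ∫ u, ‖a + Q i (Dhat i (xt1 ω₀) (xt ω₀) u.1) u.2‖ ^ 2 ∂((νb i).prod (νq i))
          ≤ B i ω₀ := by
        rw [integral_prod _ K_int]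
        have hinner_le : ∀ v : Ωb i,
            (∫ wq, ‖a + Q i (Dhat i (xt1 ω₀) (xt ω₀) v) wq‖ ^ 2 ∂(νq i))
              ≤ ‖a + Dhat i (xt1 ω₀) (xt ω₀) v‖ ^ 2
                + omg * ‖Dhat i (xt1 ω₀) (xt ω₀) v‖ ^ 2 := by
          intro v
          rw [(hsmq (Dhat i (xt1 ω₀) (xt ω₀) v)).2]
          have := hQvar i (Dhat i (xt1 ω₀) (xt ω₀) v)
          linarith
        calc (∫ v, ∫ wq, ‖a + Q i (Dhat i (xt1 ω₀) (xt ω₀) v) wq‖ ^ 2 ∂(νq i) ∂(νb i))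
            ≤ ∫ v, (‖a + Dhat i (xt1 ω₀) (xt ω₀) v‖ ^ 2
                + omg * ‖Dhat i (xt1 ω₀) (xt ω₀) v‖ ^ 2) ∂(νb i) :=
              integral_mono K_int.integral_prod_left hbound_int hinner_le
          _ = (‖a + (gradient (fS i) (xt1 ω₀) - gradient (fS i) (xt ω₀))‖ ^ 2 + V i ω₀)
              + omg * (‖gradient (fS i) (xt1 ω₀) - gradient (fS i) (xt ω₀)‖ ^ 2 + V i ω₀) := by
              rw [integral_add hDsm.1 (hz2int.const_mul omg), integral_const_mul, hz2val, hDsm.2]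
          _ = B i ω₀ := by
              have haΔ : a + (gradient (fS i) (xt1 ω₀) - gradient (fS i) (xt ω₀))
                  = gt i ω₀ - gradient (fS i) (xt ω₀) := by rw [haa]; abel
              rw [haΔ]
              simp only [hB, hW]
              ring
      -- put the coin flip together
      calc ∫ r, ‖gt1 i (ω₀, r) - gradient (fS i) (xt1 ω₀)‖ ^ 2 ∂(μc.prod ρ)
          = ∫ c, ∫ y, ‖gt1 i (ω₀, (c, y)) - gradient (fS i) (xt1 ω₀)‖ ^ 2 ∂ρ ∂μc :=
            integral_prod _ hslice
        _ = p * (∫ y, ‖gt1 i (ω₀, (true, y)) - gradient (fS i) (xt1 ω₀)‖ ^ 2 ∂ρ)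
            + (1 - p) * (∫ y, ‖gt1 i (ω₀, (false, y)) - gradient (fS i) (xt1 ω₀)‖ ^ 2 ∂ρ) := by
            rw [byz_integral_bool, hcTr, hcFr]
        _ = (1 - p) * (∫ u, ‖a + Q i (Dhat i (xt1 ω₀) (xt ω₀) u.1) u.2‖ ^ 2
              ∂((νb i).prod (νq i))) := by
            rw [htrue0, mul_zero, zero_add, hKmap]
        _ ≤ (1 - p) * B i ω₀ := mul_le_mul_of_nonneg_left hKle (by linarith)
    refine le_trans (le_of_eq (integral_prod _ (hint1 i))) ?_
    refine le_trans (integral_mono_ae (hint1 i).integral_prod_left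
      ((hBint i).const_mul (1 - p)) haebound) ?_
    exact le_of_eq (integral_const_mul _ _)
  -- summation over the workers
  have sum_le : ∑ i, ∫ w, ‖gt1 i w - gradient (fS i) (xt1 w.1)‖ ^ 2 ∂(μ₀.prod (μc.prod ρ))
      ≤ (1 - p) * ∑ i, ∫ ω₀, B i ω₀ ∂μ₀ := by
    rw [Finset.mul_sum]
    exact Finset.sum_le_sum fun i _ => claim1 i
  have hptB : ∀ ω₀, ∑ i, B i ω₀ ≤ (∑ i, ‖gt i ω₀ - gradient (fS i) (xt ω₀)‖ ^ 2)
      + (G * (omg * (Lloc ^ 2 / b + Lpm ^ 2 + L ^ 2) + Lloc ^ 2 / b))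
        * ‖xt1 ω₀ - xt ω₀‖ ^ 2 := by
    intro ω₀
    have e1 : (1 + omg) * ∑ i, V i ω₀
        ≤ (1 + omg) * (G * ((Lloc ^ 2 / b) * ‖xt1 ω₀ - xt ω₀‖ ^ 2)) :=
      mul_le_mul_of_nonneg_left (hVsum ω₀) (by linarith)
    have e2 : omg * ∑ i, W i ω₀
        ≤ omg * (G * ((Lpm ^ 2 + L ^ 2) * ‖xt1 ω₀ - xt ω₀‖ ^ 2)) :=
      mul_le_mul_of_nonneg_left (hWsum ω₀) homg
    have e3 : (1 + omg) * (G * ((Lloc ^ 2 / b) * ‖xt1 ω₀ - xt ω₀‖ ^ 2))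
        + omg * (G * ((Lpm ^ 2 + L ^ 2) * ‖xt1 ω₀ - xt ω₀‖ ^ 2))
        = (G * (omg * (Lloc ^ 2 / b + Lpm ^ 2 + L ^ 2) + Lloc ^ 2 / b))
          * ‖xt1 ω₀ - xt ω₀‖ ^ 2 := by ring
    have hsplit : ∑ i, B i ω₀ = (∑ i, ‖gt i ω₀ - gradient (fS i) (xt ω₀)‖ ^ 2)
        + ((1 + omg) * ∑ i, V i ω₀ + omg * ∑ i, W i ω₀) := by
      simp only [hB]
      rw [Finset.sum_add_distrib, Finset.sum_add_distrib, ← Finset.mul_sum, ← Finset.mul_sum]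
      ring
    rw [hsplit]
    linarith
  have hA_int : Integrable (fun ω₀ => ∑ i, ‖gt i ω₀ - gradient (fS i) (xt ω₀)‖ ^ 2) μ₀ :=
    integrable_finset_sum _ fun i _ => hint2 i
  have intB_le : ∫ ω₀, ∑ i, B i ω₀ ∂μ₀
      ≤ (∑ i, ∫ ω₀, ‖gt i ω₀ - gradient (fS i) (xt ω₀)‖ ^ 2 ∂μ₀)
        + (G * (omg * (Lloc ^ 2 / b + Lpm ^ 2 + L ^ 2) + Lloc ^ 2 / b))
          * ∫ ω₀, ‖xt1 ω₀ - xt ω₀‖ ^ 2 ∂μ₀ := by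
    calc ∫ ω₀, ∑ i, B i ω₀ ∂μ₀
        ≤ ∫ ω₀, ((∑ i, ‖gt i ω₀ - gradient (fS i) (xt ω₀)‖ ^ 2)
            + (G * (omg * (Lloc ^ 2 / b + Lpm ^ 2 + L ^ 2) + Lloc ^ 2 / b))
              * ‖xt1 ω₀ - xt ω₀‖ ^ 2) ∂μ₀ :=
          integral_mono (integrable_finset_sum _ fun i _ => hBint i)
            (hA_int.add (hint3.const_mul _)) hptB
      _ = _ := by
          rw [integral_add hA_int (hint3.const_mul _),
            integral_finset_sum _ fun i _ => hint2 i, integral_const_mul]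
  -- final assembly
  calc (1 / G) * ∑ i, ∫ w, ‖gt1 i w - gradient (fS i) (xt1 w.1)‖ ^ 2 ∂(μ₀.prod (μc.prod ρ))
      ≤ (1 / G) * ((1 - p) * ∑ i, ∫ ω₀, B i ω₀ ∂μ₀) :=
        mul_le_mul_of_nonneg_left sum_le (one_div_nonneg.mpr hG.le)
    _ = (1 - p) * ((1 / G) * ∫ ω₀, ∑ i, B i ω₀ ∂μ₀) := by
        rw [← integral_finset_sum _ fun i _ => hBint i]
        ring
    _ ≤ (1 - p) * ((1 / G) * ((∑ i, ∫ ω₀, ‖gt i ω₀ - gradient (fS i) (xt ω₀)‖ ^ 2 ∂μ₀)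
          + (G * (omg * (Lloc ^ 2 / b + Lpm ^ 2 + L ^ 2) + Lloc ^ 2 / b))
            * ∫ ω₀, ‖xt1 ω₀ - xt ω₀‖ ^ 2 ∂μ₀)) :=
        mul_le_mul_of_nonneg_left
          (mul_le_mul_of_nonneg_left intB_le (one_div_nonneg.mpr hG.le)) (by linarith)
    _ = (1 - p) * ((1 / G) * ∑ i, ∫ ω₀, ‖gt i ω₀ - gradient (fS i) (xt ω₀)‖ ^ 2 ∂μ₀
          + (omg * (Lloc ^ 2 / b + Lpm ^ 2 + L ^ 2) + Lloc ^ 2 / b)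
            * ∫ ω₀, ‖xt1 ω₀ - xt ω₀‖ ^ 2 ∂μ₀) := by
        have hGne : G ≠ 0 := ne_of_gt hG
        field_simp
        try ring
        try exact Or.inl trivial
end

section
/- (Bound on the shift increments in Byz-DASHA-PAGE.) Suppose h_i^{t+1} = ∇f_i(x^{t+1}) with probability p (the same coin for all i, independent of the rest) and h_i^{t+1} = h_i^t + Δ̂_i(x^{t+1}, x^t) otherwise, where the Δ̂_i are conditionally unbiased mini-batch estimators with batch size b satisfying the local Hessian variance bound. Then: (1/G) Σ_{i∈𝒢} E‖h_i^{t+1} − h_i^t‖² ≤ ((1−p)𝓛±²/b + 2(L±² + L²))·E‖x^{t+1} − x^t‖² + 2p·(1/G) Σ_{i∈𝒢} E‖h_i^t − ∇f_i(x^t)‖². -/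
open MeasureTheory Finset RealInnerProductSpace

lemma aux_pi_map_eval {ι : Type*} [Fintype ι] {Ωb : ι → Type*} [∀ i, MeasurableSpace (Ωb i)]
    (νb : ∀ i, Measure (Ωb i)) [∀ i, IsProbabilityMeasure (νb i)] (i : ι) :
    (Measure.pi νb).map (Function.eval i) = νb i := by
  classical
  ext s hs
  rw [Measure.map_apply (measurable_pi_apply i) hs, Set.eval_preimage, Measure.pi_pi]
  rw [Finset.prod_eq_single i (fun j _ hj => by simp [Function.update_of_ne hj])
    (fun h => absurd (Finset.mem_univ i) h)]
  simp

lemma aux_integral_eval {ι : Type*} [Fintype ι] {Ωb : ι → Type*} [∀ i, MeasurableSpace (Ωb i)]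
    (νb : ∀ i, Measure (Ωb i)) [∀ i, IsProbabilityMeasure (νb i)] (i : ι)
    (g : Ωb i → ℝ) (hg : AEStronglyMeasurable g (νb i)) :
    ∫ ω, g (ω i) ∂(Measure.pi νb) = ∫ y, g y ∂(νb i) := by
  rw [← aux_pi_map_eval νb i] at hg ⊢
  exact (integral_map (measurable_pi_apply i).aemeasurable hg).symm

lemma aux_integrable_eval {ι : Type*} [Fintype ι] {Ωb : ι → Type*} [∀ i, MeasurableSpace (Ωb i)]
    (νb : ∀ i, Measure (Ωb i)) [∀ i, IsProbabilityMeasure (νb i)] (i : ι)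
    (g : Ωb i → ℝ) (hg : Integrable g (νb i)) :
    Integrable (fun ω => g (ω i)) (Measure.pi νb) := by
  have hg' : Integrable g ((Measure.pi νb).map (Function.eval i)) := by
    rwa [aux_pi_map_eval νb i]
  exact (integrable_map_measure hg'.aestronglyMeasurable
    (measurable_pi_apply i).aemeasurable).mp hg'

lemma aux_second_moment {α : Type*} [MeasurableSpace α] (μ : Measure α) [IsProbabilityMeasure μ]
    {d : ℕ} (f : α → EuclideanSpace ℝ (Fin d)) (m : EuclideanSpace ℝ (Fin d))
    (hf : Integrable f μ) (hf2 : Integrable (fun x => ‖f x - m‖ ^ 2) μ)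
    (hm : ∫ x, f x ∂μ = m) :
    ∫ x, ‖f x‖ ^ 2 ∂μ = ‖m‖ ^ 2 + ∫ x, ‖f x - m‖ ^ 2 ∂μ := by
  have hsub : Integrable (fun x => f x - m) μ := hf.sub (integrable_const m)
  have hinner : Integrable (fun x => ⟪m, f x - m⟫) μ := hsub.const_inner m
  have key : ∀ x, ‖f x‖ ^ 2 = ‖f x - m‖ ^ 2 + (2 * ⟪m, f x - m⟫ + ‖m‖ ^ 2) := by
    intro x
    have h := norm_add_sq_real (f x - m) m
    rw [sub_add_cancel] at h
    rw [h, real_inner_comm]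
    ring
  calc ∫ x, ‖f x‖ ^ 2 ∂μ
      = ∫ x, (‖f x - m‖ ^ 2 + (2 * ⟪m, f x - m⟫ + ‖m‖ ^ 2)) ∂μ := by simp_rw [key]
    _ = (∫ x, ‖f x - m‖ ^ 2 ∂μ) + ∫ x, (2 * ⟪m, f x - m⟫ + ‖m‖ ^ 2) ∂μ :=
        integral_add hf2 ((hinner.const_mul 2).add (integrable_const _))
    _ = ‖m‖ ^ 2 + ∫ x, ‖f x - m‖ ^ 2 ∂μ := by
        rw [integral_add (hinner.const_mul 2) (integrable_const _), integral_const_mul,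
          integral_inner hsub, integral_sub hf (integrable_const m), hm]
        simp
        ring


/-- Bound on the shift increments in Byz-DASHA-PAGE. -/
theorem shift_increment_bound_byz_dasha_page
    {d : ℕ} {ι : Type*} [Fintype ι]
    -- local loss functions and their average
    (fS : ι → EuclideanSpace ℝ (Fin d) → ℝ)
    (f : EuclideanSpace ℝ (Fin d) → ℝ)
    (hf : ∀ x, f x = (1 / (Fintype.card ι : ℝ)) * ∑ i, fS i x)
    (hdiff : ∀ i, Differentiable ℝ (fS i))
    -- L-smoothness of f
    (L : ℝ) (hL : 0 ≤ L)
    (hsmooth : ∀ x y, ‖gradient f x - gradient f y‖ ≤ L * ‖x - y‖)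
    -- global Hessian variance
    (Lpm : ℝ) (hLpm : 0 ≤ Lpm)
    (hGH : ∀ x y, (1 / (Fintype.card ι : ℝ)) *
          ∑ i, ‖gradient (fS i) x - gradient (fS i) y‖ ^ 2
        - ‖gradient f x - gradient f y‖ ^ 2
      ≤ Lpm ^ 2 * ‖x - y‖ ^ 2)
    -- probability of full-gradient synchronization
    (p : ℝ) (hp0 : 0 < p) (hp1 : p ≤ 1)
    -- past randomness
    {Ω₀ : Type*} [MeasurableSpace Ω₀] (μ₀ : Measure Ω₀) [IsProbabilityMeasure μ₀]
    -- coin randomness (the same coin for all workers)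
    (μc : Measure Bool) [IsProbabilityMeasure μc]
    (hcoin : μc {true} = ENNReal.ofReal p)
    -- mini-batch estimator randomness (independent across workers)
    {Ωb : ι → Type*} [∀ i, MeasurableSpace (Ωb i)]
    (νb : ∀ i, Measure (Ωb i)) [∀ i, IsProbabilityMeasure (νb i)]
    -- mini-batch estimators: conditionally unbiased, local Hessian variance with batch size b
    (Dhat : (i : ι) → EuclideanSpace ℝ (Fin d) → EuclideanSpace ℝ (Fin d) →
      Ωb i → EuclideanSpace ℝ (Fin d))
    (hDmeas : ∀ i, Measurable fun q :
        (EuclideanSpace ℝ (Fin d) × EuclideanSpace ℝ (Fin d)) × Ωb i =>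
        Dhat i q.1.1 q.1.2 q.2)
    (hDint : ∀ i x y, Integrable (fun wb => Dhat i x y wb) (νb i))
    (hDint2 : ∀ i x y, Integrable
      (fun wb => ‖Dhat i x y wb - (gradient (fS i) x - gradient (fS i) y)‖ ^ 2) (νb i))
    (hDunbiased : ∀ i x y,
      ∫ wb, Dhat i x y wb ∂(νb i) = gradient (fS i) x - gradient (fS i) y)
    (b Lloc : ℝ) (hb : 0 < b) (hLloc : 0 ≤ Lloc)
    (hlocal : ∀ x y, (1 / (Fintype.card ι : ℝ)) *
        ∑ i, ∫ wb, ‖Dhat i x y wb - (gradient (fS i) x - gradient (fS i) y)‖ ^ 2 ∂(νb i)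
      ≤ (Lloc ^ 2 / b) * ‖x - y‖ ^ 2)
    -- current iterates and shifts (measurable with respect to the past)
    (xt xt1 : Ω₀ → EuclideanSpace ℝ (Fin d))
    (ht : ι → Ω₀ → EuclideanSpace ℝ (Fin d))
    (hxtm : Measurable xt) (hxt1m : Measurable xt1) (hhtm : ∀ i, Measurable (ht i))
    -- the new shifts: with probability p set to the full gradient,
    -- otherwise add a stochastic gradient difference
    (ht1 : ι → Ω₀ × Bool × (∀ i, Ωb i) → EuclideanSpace ℝ (Fin d))
    (hht1 : ∀ i w, ht1 i w =
      if w.2.1 then gradient (fS i) (xt1 w.1)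
      else ht i w.1 + Dhat i (xt1 w.1) (xt w.1) (w.2.2 i))
    -- integrability of the relevant squared norms
    (hint1 : ∀ i, Integrable
      (fun w : Ω₀ × Bool × (∀ i, Ωb i) => ‖ht1 i w - ht i w.1‖ ^ 2)
      (μ₀.prod (μc.prod (Measure.pi νb))))
    (hint2 : ∀ i, Integrable
      (fun ω₀ => ‖ht i ω₀ - gradient (fS i) (xt ω₀)‖ ^ 2) μ₀)
    (hint3 : Integrable (fun ω₀ => ‖xt1 ω₀ - xt ω₀‖ ^ 2) μ₀) :
    (1 / (Fintype.card ι : ℝ)) *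
        ∑ i, ∫ w, ‖ht1 i w - ht i w.1‖ ^ 2 ∂(μ₀.prod (μc.prod (Measure.pi νb)))
      ≤ ((1 - p) * Lloc ^ 2 / b + 2 * (Lpm ^ 2 + L ^ 2)) *
          ∫ ω₀, ‖xt1 ω₀ - xt ω₀‖ ^ 2 ∂μ₀
        + 2 * p * ((1 / (Fintype.card ι : ℝ)) *
            ∑ i, ∫ ω₀, ‖ht i ω₀ - gradient (fS i) (xt ω₀)‖ ^ 2 ∂μ₀) := by
  classical
  -- the inner (coin + batch) integral, computed exactly
  have hE : ∀ (i : ι) (ω₀ : Ω₀),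
      ∫ z, ‖ht1 i (ω₀, z) - ht i ω₀‖ ^ 2 ∂(μc.prod (Measure.pi νb))
      = p * ‖gradient (fS i) (xt1 ω₀) - ht i ω₀‖ ^ 2
        + (1 - p) * (‖gradient (fS i) (xt1 ω₀) - gradient (fS i) (xt ω₀)‖ ^ 2
          + ∫ wb, ‖Dhat i (xt1 ω₀) (xt ω₀) wb
              - (gradient (fS i) (xt1 ω₀) - gradient (fS i) (xt ω₀))‖ ^ 2 ∂(νb i)) := by
    intro i ω₀
    have hDm : Measurable fun wb => Dhat i (xt1 ω₀) (xt ω₀) wb := by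
      have h := (hDmeas i).comp (measurable_const.prodMk measurable_id :
        Measurable fun wb : Ωb i => (((xt1 ω₀), (xt ω₀)), wb))
      exact h
    have hBm : Measurable fun wb => ‖Dhat i (xt1 ω₀) (xt ω₀) wb‖ ^ 2 := hDm.norm.pow_const 2
    set Δ : EuclideanSpace ℝ (Fin d) :=
      gradient (fS i) (xt1 ω₀) - gradient (fS i) (xt ω₀) with hΔ
    have hBint : Integrable (fun wb => ‖Dhat i (xt1 ω₀) (xt ω₀) wb‖ ^ 2) (νb i) := by
      have h0 : Integrable (fun wb => Dhat i (xt1 ω₀) (xt ω₀) wb - Δ) (νb i) :=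
        (hDint i _ _).sub (integrable_const Δ)
      have hexp : (fun wb => ‖Dhat i (xt1 ω₀) (xt ω₀) wb‖ ^ 2)
          = fun wb => ‖Dhat i (xt1 ω₀) (xt ω₀) wb - Δ‖ ^ 2
              + (2 * ⟪Dhat i (xt1 ω₀) (xt ω₀) wb - Δ, Δ⟫ + ‖Δ‖ ^ 2) := by
        funext wb
        have h := norm_add_sq_real (Dhat i (xt1 ω₀) (xt ω₀) wb - Δ) Δ
        rw [sub_add_cancel] at h
        rw [h]; ring
      rw [hexp]
      exact (hDint2 i _ _).add (((h0.inner_const Δ).const_mul 2).add (integrable_const _))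
    have hFm : Measurable fun z : Bool × (∀ j, Ωb j) =>
        if z.1 then ‖gradient (fS i) (xt1 ω₀) - ht i ω₀‖ ^ 2
        else ‖Dhat i (xt1 ω₀) (xt ω₀) (z.2 i)‖ ^ 2 := by
      refine Measurable.ite ?_ measurable_const
        (hBm.comp ((measurable_pi_apply i).comp measurable_snd))
      exact measurable_fst (measurableSet_singleton true)
    have hFint : Integrable (fun z : Bool × (∀ j, Ωb j) =>
        if z.1 then ‖gradient (fS i) (xt1 ω₀) - ht i ω₀‖ ^ 2
        else ‖Dhat i (xt1 ω₀) (xt ω₀) (z.2 i)‖ ^ 2) (μc.prod (Measure.pi νb)) := by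
      refine (integrable_prod_iff hFm.aestronglyMeasurable).2 ⟨?_, ?_⟩
      · refine Filter.Eventually.of_forall fun bc => ?_
        cases bc with
        | true =>
            simpa using integrable_const (μ := Measure.pi νb)
              (‖gradient (fS i) (xt1 ω₀) - ht i ω₀‖ ^ 2)
        | false => simpa using aux_integrable_eval νb i _ hBint
      · exact Integrable.of_finite
    have step1 : (fun z : Bool × (∀ j, Ωb j) => ‖ht1 i (ω₀, z) - ht i ω₀‖ ^ 2)
        = fun z => if z.1 then ‖gradient (fS i) (xt1 ω₀) - ht i ω₀‖ ^ 2
          else ‖Dhat i (xt1 ω₀) (xt ω₀) (z.2 i)‖ ^ 2 := by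
      funext z
      rcases z with ⟨bc, ω⟩
      rw [hht1]
      cases bc <;> simp
    have hct : (μc {true}).toReal = p := by
      rw [hcoin]; exact ENNReal.toReal_ofReal hp0.le
    have hcf : (μc {false}).toReal = 1 - p := by
      have hcompl : ({true}ᶜ : Set Bool) = {false} := by
        ext c; cases c <;> simp
      have hm := measure_compl (μ := μc) (measurableSet_singleton true)
        (measure_ne_top μc {true})
      rw [hcompl, measure_univ, hcoin] at hm
      have hle : ENNReal.ofReal p ≤ 1 := by rw [← hcoin]; exact prob_le_one
      rw [hm, ENNReal.toReal_sub_of_le hle ENNReal.one_ne_top, ENNReal.toReal_one,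
        ENNReal.toReal_ofReal hp0.le]
    have hsecond : ∫ wb, ‖Dhat i (xt1 ω₀) (xt ω₀) wb‖ ^ 2 ∂(νb i)
        = ‖Δ‖ ^ 2 + ∫ wb, ‖Dhat i (xt1 ω₀) (xt ω₀) wb - Δ‖ ^ 2 ∂(νb i) :=
      aux_second_moment (νb i) _ Δ (hDint i _ _) (hDint2 i _ _) (hDunbiased i _ _)
    rw [step1, integral_prod _ hFint, integral_fintype Integrable.of_finite,
      Fintype.sum_bool]
    simp only [if_true, if_false, Bool.false_eq_true]
    rw [aux_integral_eval νb i _ hBint.aestronglyMeasurable, hsecond, measureReal_def, measureReal_def, hct, hcf]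
    simp [smul_eq_mul]
  -- per-worker splitting of the triple integral
  have hIi : ∀ i, (∫ w, ‖ht1 i w - ht i w.1‖ ^ 2 ∂(μ₀.prod (μc.prod (Measure.pi νb))))
      = ∫ ω₀, (p * ‖gradient (fS i) (xt1 ω₀) - ht i ω₀‖ ^ 2
        + (1 - p) * (‖gradient (fS i) (xt1 ω₀) - gradient (fS i) (xt ω₀)‖ ^ 2
          + ∫ wb, ‖Dhat i (xt1 ω₀) (xt ω₀) wb
              - (gradient (fS i) (xt1 ω₀) - gradient (fS i) (xt ω₀))‖ ^ 2 ∂(νb i))) ∂μ₀ := by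
    intro i
    rw [integral_prod _ (hint1 i)]
    exact integral_congr_ae (Filter.Eventually.of_forall fun ω₀ => hE i ω₀)
  have hform_int : ∀ i, Integrable (fun ω₀ =>
      p * ‖gradient (fS i) (xt1 ω₀) - ht i ω₀‖ ^ 2
        + (1 - p) * (‖gradient (fS i) (xt1 ω₀) - gradient (fS i) (xt ω₀)‖ ^ 2
          + ∫ wb, ‖Dhat i (xt1 ω₀) (xt ω₀) wb
              - (gradient (fS i) (xt1 ω₀) - gradient (fS i) (xt ω₀))‖ ^ 2 ∂(νb i))) μ₀ := by
    intro i
    exact (hint1 i).integral_prod_left.congr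
      (Filter.Eventually.of_forall fun ω₀ => hE i ω₀)
  rcases isEmpty_or_nonempty ι with hι | hι
  · have hs : 0 ≤ ∫ ω₀, ‖xt1 ω₀ - xt ω₀‖ ^ 2 ∂μ₀ := integral_nonneg fun _ => sq_nonneg _
    have hc : 0 ≤ (1 - p) * Lloc ^ 2 / b + 2 * (Lpm ^ 2 + L ^ 2) := by
      have h1 : (0:ℝ) ≤ 1 - p := by linarith
      have := div_nonneg (mul_nonneg h1 (sq_nonneg Lloc)) hb.le
      positivity
    simp only [univ_eq_empty, Finset.sum_empty, mul_zero, add_zero]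
    exact mul_nonneg hc hs
  · have hGpos : (0:ℝ) < (Fintype.card ι : ℝ) := by exact_mod_cast Fintype.card_pos
    -- pointwise (in ω₀) bound on the sum of the formulas
    have hpt : ∀ ω₀ : Ω₀, (∑ i, (p * ‖gradient (fS i) (xt1 ω₀) - ht i ω₀‖ ^ 2
        + (1 - p) * (‖gradient (fS i) (xt1 ω₀) - gradient (fS i) (xt ω₀)‖ ^ 2
          + ∫ wb, ‖Dhat i (xt1 ω₀) (xt ω₀) wb
              - (gradient (fS i) (xt1 ω₀) - gradient (fS i) (xt ω₀))‖ ^ 2 ∂(νb i))))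
        ≤ (Fintype.card ι : ℝ) * (((1 - p) * Lloc ^ 2 / b + 2 * (Lpm ^ 2 + L ^ 2))
            * ‖xt1 ω₀ - xt ω₀‖ ^ 2)
          + 2 * p * ∑ i, ‖ht i ω₀ - gradient (fS i) (xt ω₀)‖ ^ 2 := by
      intro ω₀
      set x := xt1 ω₀ with hx
      set y := xt ω₀ with hy
      have hA : ∀ i, ‖gradient (fS i) x - ht i ω₀‖ ^ 2
          ≤ 2 * ‖gradient (fS i) x - gradient (fS i) y‖ ^ 2
            + 2 * ‖ht i ω₀ - gradient (fS i) y‖ ^ 2 := by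
        intro i
        have h1 := norm_add_le (gradient (fS i) x - gradient (fS i) y)
          (gradient (fS i) y - ht i ω₀)
        rw [sub_add_sub_cancel] at h1
        have h2 : ‖gradient (fS i) y - ht i ω₀‖ = ‖ht i ω₀ - gradient (fS i) y‖ :=
          norm_sub_rev _ _
        rw [h2] at h1
        nlinarith [norm_nonneg (gradient (fS i) x - gradient (fS i) y),
          norm_nonneg (ht i ω₀ - gradient (fS i) y),
          norm_nonneg (gradient (fS i) x - ht i ω₀),
          sq_nonneg (‖gradient (fS i) x - gradient (fS i) y‖
            - ‖ht i ω₀ - gradient (fS i) y‖)]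
      have h3 : ‖gradient f x - gradient f y‖ ^ 2 ≤ L ^ 2 * ‖x - y‖ ^ 2 := by
        have h2 := hsmooth x y
        nlinarith [norm_nonneg (gradient f x - gradient f y),
          mul_nonneg hL (norm_nonneg (x - y))]
      have hSD : ∑ i, ‖gradient (fS i) x - gradient (fS i) y‖ ^ 2
          ≤ (Fintype.card ι : ℝ) * ((Lpm ^ 2 + L ^ 2) * ‖x - y‖ ^ 2) := by
        have h1 := hGH x y
        have h4 : (1 / (Fintype.card ι : ℝ))
            * ∑ i, ‖gradient (fS i) x - gradient (fS i) y‖ ^ 2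
            ≤ (Lpm ^ 2 + L ^ 2) * ‖x - y‖ ^ 2 := by nlinarith
        have h5 := mul_le_mul_of_nonneg_left h4 hGpos.le
        rw [← mul_assoc, mul_one_div, div_self hGpos.ne', one_mul] at h5
        exact h5
      have hSV : ∑ i, (∫ wb, ‖Dhat i x y wb
            - (gradient (fS i) x - gradient (fS i) y)‖ ^ 2 ∂(νb i))
          ≤ (Fintype.card ι : ℝ) * ((Lloc ^ 2 / b) * ‖x - y‖ ^ 2) := by
        have h1 := hlocal x y
        have h5 := mul_le_mul_of_nonneg_left h1 hGpos.le
        rw [← mul_assoc, mul_one_div, div_self hGpos.ne', one_mul] at h5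
        exact h5
      have hSD0 : (0:ℝ) ≤ ∑ i, ‖gradient (fS i) x - gradient (fS i) y‖ ^ 2 :=
        Finset.sum_nonneg fun i _ => sq_nonneg _
      have hstep : ∑ i, (p * ‖gradient (fS i) x - ht i ω₀‖ ^ 2
          + (1 - p) * (‖gradient (fS i) x - gradient (fS i) y‖ ^ 2
            + ∫ wb, ‖Dhat i x y wb
                - (gradient (fS i) x - gradient (fS i) y)‖ ^ 2 ∂(νb i)))
          ≤ (1 + p) * ∑ i, ‖gradient (fS i) x - gradient (fS i) y‖ ^ 2
            + (1 - p) * ∑ i, (∫ wb, ‖Dhat i x y wb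
                - (gradient (fS i) x - gradient (fS i) y)‖ ^ 2 ∂(νb i))
            + 2 * p * ∑ i, ‖ht i ω₀ - gradient (fS i) y‖ ^ 2 := by
        rw [Finset.mul_sum, Finset.mul_sum, Finset.mul_sum, ← Finset.sum_add_distrib,
          ← Finset.sum_add_distrib]
        refine Finset.sum_le_sum fun i _ => ?_
        nlinarith [mul_le_mul_of_nonneg_left (hA i) hp0.le]
      have hmul := mul_le_mul_of_nonneg_left hSV (by linarith : (0:ℝ) ≤ 1 - p)
      have hpSD := mul_le_mul_of_nonneg_right hp1 hSD0
      rw [one_mul] at hpSD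
      have h2SD := mul_le_mul_of_nonneg_left hSD (by norm_num : (0:ℝ) ≤ 2)
      have hkey : (Fintype.card ι : ℝ) * (((1 - p) * Lloc ^ 2 / b
            + 2 * (Lpm ^ 2 + L ^ 2)) * ‖x - y‖ ^ 2)
          = (1 - p) * ((Fintype.card ι : ℝ) * (Lloc ^ 2 / b * ‖x - y‖ ^ 2))
            + 2 * ((Fintype.card ι : ℝ) * ((Lpm ^ 2 + L ^ 2) * ‖x - y‖ ^ 2)) := by ring
      linarith [hstep, hmul, hpSD, h2SD]
    -- integrate the pointwise bound
    have hRHSint : Integrable (fun ω₀ =>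
        (Fintype.card ι : ℝ) * (((1 - p) * Lloc ^ 2 / b + 2 * (Lpm ^ 2 + L ^ 2))
            * ‖xt1 ω₀ - xt ω₀‖ ^ 2)
          + 2 * p * ∑ i, ‖ht i ω₀ - gradient (fS i) (xt ω₀)‖ ^ 2) μ₀ :=
      ((hint3.const_mul _).const_mul _).add
        ((integrable_finset_sum _ fun i _ => hint2 i).const_mul _)
    have hmain : ∑ i, ∫ w, ‖ht1 i w - ht i w.1‖ ^ 2 ∂(μ₀.prod (μc.prod (Measure.pi νb)))
        ≤ (Fintype.card ι : ℝ) * (((1 - p) * Lloc ^ 2 / b + 2 * (Lpm ^ 2 + L ^ 2))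
            * ∫ ω₀, ‖xt1 ω₀ - xt ω₀‖ ^ 2 ∂μ₀)
          + 2 * p * ∑ i, ∫ ω₀, ‖ht i ω₀ - gradient (fS i) (xt ω₀)‖ ^ 2 ∂μ₀ := by
      calc ∑ i, ∫ w, ‖ht1 i w - ht i w.1‖ ^ 2 ∂(μ₀.prod (μc.prod (Measure.pi νb)))
          = ∑ i, ∫ ω₀, (p * ‖gradient (fS i) (xt1 ω₀) - ht i ω₀‖ ^ 2
            + (1 - p) * (‖gradient (fS i) (xt1 ω₀) - gradient (fS i) (xt ω₀)‖ ^ 2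
              + ∫ wb, ‖Dhat i (xt1 ω₀) (xt ω₀) wb
                  - (gradient (fS i) (xt1 ω₀) - gradient (fS i) (xt ω₀))‖ ^ 2 ∂(νb i))) ∂μ₀ :=
            Finset.sum_congr rfl fun i _ => hIi i
        _ = ∫ ω₀, (∑ i, (p * ‖gradient (fS i) (xt1 ω₀) - ht i ω₀‖ ^ 2
            + (1 - p) * (‖gradient (fS i) (xt1 ω₀) - gradient (fS i) (xt ω₀)‖ ^ 2
              + ∫ wb, ‖Dhat i (xt1 ω₀) (xt ω₀) wb
                  - (gradient (fS i) (xt1 ω₀) - gradient (fS i) (xt ω₀))‖ ^ 2 ∂(νb i)))) ∂μ₀ :=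
            (integral_finset_sum univ fun i _ => hform_int i).symm
        _ ≤ ∫ ω₀, ((Fintype.card ι : ℝ) * (((1 - p) * Lloc ^ 2 / b + 2 * (Lpm ^ 2 + L ^ 2))
              * ‖xt1 ω₀ - xt ω₀‖ ^ 2)
            + 2 * p * ∑ i, ‖ht i ω₀ - gradient (fS i) (xt ω₀)‖ ^ 2) ∂μ₀ :=
            integral_mono (integrable_finset_sum _ fun i _ => hform_int i) hRHSint hpt
        _ = (Fintype.card ι : ℝ) * (((1 - p) * Lloc ^ 2 / b + 2 * (Lpm ^ 2 + L ^ 2))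
              * ∫ ω₀, ‖xt1 ω₀ - xt ω₀‖ ^ 2 ∂μ₀)
            + 2 * p * ∑ i, ∫ ω₀, ‖ht i ω₀ - gradient (fS i) (xt ω₀)‖ ^ 2 ∂μ₀ := by
            rw [integral_add ((hint3.const_mul _).const_mul _)
              ((integrable_finset_sum _ fun i _ => hint2 i).const_mul _),
              integral_const_mul, integral_const_mul, integral_const_mul,
              integral_finset_sum _ fun i _ => hint2 i]
    have h1G : (0:ℝ) ≤ 1 / (Fintype.card ι : ℝ) := by positivity
    calc (1 / (Fintype.card ι : ℝ))
          * ∑ i, ∫ w, ‖ht1 i w - ht i w.1‖ ^ 2 ∂(μ₀.prod (μc.prod (Measure.pi νb)))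
        ≤ (1 / (Fintype.card ι : ℝ))
          * ((Fintype.card ι : ℝ) * (((1 - p) * Lloc ^ 2 / b + 2 * (Lpm ^ 2 + L ^ 2))
              * ∫ ω₀, ‖xt1 ω₀ - xt ω₀‖ ^ 2 ∂μ₀)
            + 2 * p * ∑ i, ∫ ω₀, ‖ht i ω₀ - gradient (fS i) (xt ω₀)‖ ^ 2 ∂μ₀) :=
          mul_le_mul_of_nonneg_left hmain h1G
      _ = ((1 - p) * Lloc ^ 2 / b + 2 * (Lpm ^ 2 + L ^ 2))
            * ∫ ω₀, ‖xt1 ω₀ - xt ω₀‖ ^ 2 ∂μ₀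
          + 2 * p * ((1 / (Fintype.card ι : ℝ))
            * ∑ i, ∫ ω₀, ‖ht i ω₀ - gradient (fS i) (xt ω₀)‖ ^ 2 ∂μ₀) := by
          have hNN : (1 / (Fintype.card ι : ℝ)) * (Fintype.card ι : ℝ) = 1 := by
            field_simp
          rw [mul_add, ← mul_assoc, hNN, one_mul]
          ring
end

section
/- (Recursion for the individual compression errors in Byz-DASHA-PAGE.) Under the same update rules as in the preceding setting (g_i^{t+1} = g_i^t + 𝒬_i(h_i^{t+1} − h_i^t − a(g_i^t − h_i^t)) with ω-unbiased compressors 𝒬_i; h_i^{t+1} = ∇f_i(x^{t+1}) with probability p and h_i^{t+1} = h_i^t + Δ̂_i(x^{t+1}, x^t) otherwise): (1/G) Σ_{i∈𝒢} E‖g_i^{t+1} − h_i^{t+1}‖² ≤ (2a²ω + (1−a)²)·(1/G) Σ_{i∈𝒢} E‖g_i^t − h_i^t‖² + 4pω·(1/G) Σ_{i∈𝒢} E‖h_i^t − ∇f_i(x^t)‖² + 2ω·((1−p)𝓛±²/b + 2(L±² + L²))·E‖x^{t+1} − x^t‖². -/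
open MeasureTheory Finset Function
local notation "⟪" x ", " y "⟫" => @inner ℝ _ _ x y

section helpers
variable {d : ℕ}
local notation "E" => EuclideanSpace ℝ (Fin d)

lemma map_pi_eval {ι : Type*} [Fintype ι] {α : ι → Type*} [∀ i, MeasurableSpace (α i)]
    (ν : ∀ i, Measure (α i)) [∀ i, IsProbabilityMeasure (ν i)] (i : ι) :
    (Measure.pi ν).map (Function.eval i) = ν i := by
  classical
  apply Measure.ext
  intro s hs
  rw [Measure.map_apply (measurable_pi_apply i) hs, Set.eval_preimage,
    Measure.pi_pi]
  rw [Fintype.prod_eq_single i]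
  · simp
  · intro j hj; simp [Function.update_of_ne hj]

lemma lintegral_pi_eval {ι : Type*} [Fintype ι] {α : ι → Type*} [∀ i, MeasurableSpace (α i)]
    (ν : ∀ i, Measure (α i)) [∀ i, IsProbabilityMeasure (ν i)] (i : ι)
    (g : α i → ENNReal) (hg : Measurable g) :
    ∫⁻ w, g (w i) ∂(Measure.pi ν) = ∫⁻ x, g x ∂(ν i) := by
  rw [← map_pi_eval ν i, lintegral_map hg (measurable_pi_apply i)]

lemma mean_shift {Ω : Type*} [MeasurableSpace Ω] (ν : Measure Ω) [IsProbabilityMeasure ν]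
    (X : Ω → E) (c : E) (hX : Integrable X ν) (hX2 : Integrable (fun ω => ‖X ω‖ ^ 2) ν)
    (hmean : ∫ ω, X ω ∂ν = 0) :
    ∫ ω, ‖X ω + c‖ ^ 2 ∂ν = (∫ ω, ‖X ω‖ ^ 2 ∂ν) + ‖c‖ ^ 2 := by
  have h1 : Integrable (fun ω => 2 * ⟪c, X ω⟫ + ‖c‖ ^ 2) ν :=
    (((hX.const_inner c).const_mul 2).add (integrable_const _))
  calc ∫ ω, ‖X ω + c‖ ^ 2 ∂ν = ∫ ω, (‖X ω‖ ^ 2 + (2 * ⟪c, X ω⟫ + ‖c‖ ^ 2)) ∂ν := by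
        congr 1; funext ω; rw [norm_add_sq_real, real_inner_comm]; ring
    _ = (∫ ω, ‖X ω‖ ^ 2 ∂ν) + ∫ ω, (2 * ⟪c, X ω⟫ + ‖c‖ ^ 2) ∂ν := integral_add hX2 h1
    _ = (∫ ω, ‖X ω‖ ^ 2 ∂ν) + ‖c‖ ^ 2 := by
        rw [integral_add ((hX.const_inner c).const_mul 2) (integrable_const _),
          MeasureTheory.integral_const_mul]
        have h3 : ∫ ω, ⟪c, X ω⟫ ∂ν = ⟪c, ∫ ω, X ω ∂ν⟫ := integral_inner hX c
        rw [h3, hmean, inner_zero_right, integral_const]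
        simp

lemma sq_add_le (u v : E) : ‖u + v‖ ^ 2 ≤ 2 * ‖u‖ ^ 2 + 2 * ‖v‖ ^ 2 := by
  have h := norm_add_le u v
  have h2 : ‖u + v‖ ^ 2 ≤ (‖u‖ + ‖v‖) ^ 2 := by
    have := pow_le_pow_left₀ (norm_nonneg _) h 2
    exact this
  nlinarith [norm_nonneg u, norm_nonneg v, sq_nonneg (‖u‖ - ‖v‖)]

lemma int_shift {Ω : Type*} [MeasurableSpace Ω] (ν : Measure Ω) [IsProbabilityMeasure ν]
    (X : Ω → E) (c : E) (hX : Integrable X ν) (hX2 : Integrable (fun ω => ‖X ω‖ ^ 2) ν) :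
    Integrable (fun ω => ‖X ω + c‖ ^ 2) ν := by
  have : (fun ω => ‖X ω + c‖ ^ 2) =
      fun ω => ‖X ω‖ ^ 2 + (2 * ⟪c, X ω⟫ + ‖c‖ ^ 2) := by
    funext ω; rw [norm_add_sq_real, real_inner_comm]; ring
  rw [this]
  exact hX2.add (((hX.const_inner c).const_mul 2).add (integrable_const _))

lemma compress_bound {Ω : Type*} [MeasurableSpace Ω] (ν : Measure Ω) [IsProbabilityMeasure ν]
    (Q : Ω → E) (z c : E) (omg : ℝ)
    (hint : Integrable Q ν) (hint2 : Integrable (fun wq => ‖Q wq - z‖ ^ 2) ν)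
    (hub : ∫ wq, Q wq ∂ν = z) (hvar : ∫ wq, ‖Q wq - z‖ ^ 2 ∂ν ≤ omg * ‖z‖ ^ 2) :
    ∫⁻ wq, ENNReal.ofReal (‖Q wq - z + c‖ ^ 2) ∂ν
      ≤ ENNReal.ofReal (omg * ‖z‖ ^ 2 + ‖c‖ ^ 2) := by
  have hXint : Integrable (fun wq => Q wq - z) ν := hint.sub (integrable_const z)
  have hI : Integrable (fun wq => ‖Q wq - z + c‖ ^ 2) ν := int_shift ν _ c hXint hint2
  rw [← ofReal_integral_eq_lintegral_ofReal hI
    (Filter.Eventually.of_forall fun _ => by positivity)]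
  apply ENNReal.ofReal_le_ofReal
  have hmean : ∫ wq, (Q wq - z) ∂ν = 0 := by
    rw [integral_sub hint (integrable_const z), hub, integral_const]
    simp
  rw [mean_shift ν _ c hXint hint2 hmean]
  linarith

lemma lintegral_bool (μ : Measure Bool) (f : Bool → ENNReal) :
    ∫⁻ x, f x ∂μ = f true * μ {true} + f false * μ {false} := by
  rw [lintegral_fintype]
  simp [Fintype.sum_bool]

lemma measurable_gradient (f : E → ℝ) : Measurable (gradient f) :=
  ((InnerProductSpace.toDual ℝ _).symm.continuous.measurable).comp (measurable_fderiv ℝ f)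

lemma Mbound (omg a : ℝ) (homg : 0 ≤ omg) (u v : E) :
    omg * ‖u - a • v‖ ^ 2 + ‖(1 - a) • v‖ ^ 2
      ≤ 2 * omg * ‖u‖ ^ 2 + (2 * a ^ 2 * omg + (1 - a) ^ 2) * ‖v‖ ^ 2 := by
  have h1 : ‖u - a • v‖ ^ 2 ≤ 2 * ‖u‖ ^ 2 + 2 * (a ^ 2 * ‖v‖ ^ 2) := by
    have := sq_add_le u (-(a • v))
    rw [← sub_eq_add_neg] at this
    rw [norm_neg, norm_smul] at this
    simpa [mul_pow, sq_abs] using this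
  have h2 : ‖(1 - a) • v‖ ^ 2 = (1 - a) ^ 2 * ‖v‖ ^ 2 := by
    rw [norm_smul, Real.norm_eq_abs, mul_pow, sq_abs]
  nlinarith [mul_le_mul_of_nonneg_left h1 homg]

set_option maxHeartbeats 2000000 in
/-- Core per-worker bound: iterated integral of the compression error. -/
lemma claimA_aux {ι : Type*} [Fintype ι]
    {Ω₀ : Type*} [MeasurableSpace Ω₀] (μ₀ : Measure Ω₀) [IsProbabilityMeasure μ₀]
    (μc : Measure Bool) [IsProbabilityMeasure μc]
    {Ωb : ι → Type*} [∀ i, MeasurableSpace (Ωb i)]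
    (νb : ∀ i, Measure (Ωb i)) [∀ i, IsProbabilityMeasure (νb i)]
    {Ωq : ι → Type*} [∀ i, MeasurableSpace (Ωq i)]
    (νq : ∀ i, Measure (Ωq i)) [∀ i, IsProbabilityMeasure (νq i)]
    (i : ι) (p a omg : ℝ) (hp0 : 0 < p) (hp1 : p ≤ 1) (homg : 0 ≤ omg)
    (hcoin : μc {true} = ENNReal.ofReal p)
    (φ1 φ0 g h : Ω₀ → E)
    (hφ1 : Measurable φ1) (hφ0 : Measurable φ0) (hg : Measurable g) (hh : Measurable h)
    (D : Ω₀ → Ωb i → E)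
    (hDm : Measurable fun q : Ω₀ × Ωb i => D q.1 q.2)
    (hDint : ∀ ω₀, Integrable (D ω₀) (νb i))
    (hDint2 : ∀ ω₀, Integrable (fun wb => ‖D ω₀ wb - (φ1 ω₀ - φ0 ω₀)‖ ^ 2) (νb i))
    (hDub : ∀ ω₀, ∫ wb, D ω₀ wb ∂(νb i) = φ1 ω₀ - φ0 ω₀)
    (Qf : E → Ωq i → E) (hQm : Measurable fun q : E × Ωq i => Qf q.1 q.2)
    (hQint : ∀ z, Integrable (Qf z) (νq i))
    (hQint2 : ∀ z, Integrable (fun wq => ‖Qf z wq - z‖ ^ 2) (νq i))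
    (hQub : ∀ z, ∫ wq, Qf z wq ∂(νq i) = z)
    (hQvar : ∀ z, ∫ wq, ‖Qf z wq - z‖ ^ 2 ∂(νq i) ≤ omg * ‖z‖ ^ 2)
    (F : Ω₀ × Bool × (∀ j, Ωb j) × (∀ j, Ωq j) → E)
    (hF : ∀ w, F w =
      Qf ((if w.2.1 then φ1 w.1 else h w.1 + D w.1 (w.2.2.1 i)) - h w.1
          - a • (g w.1 - h w.1)) (w.2.2.2 i)
        - ((if w.2.1 then φ1 w.1 else h w.1 + D w.1 (w.2.2.1 i)) - h w.1
          - a • (g w.1 - h w.1))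
        + (1 - a) • (g w.1 - h w.1)) :
    ∫⁻ w, ENNReal.ofReal (‖F w‖ ^ 2)
        ∂(μ₀.prod (μc.prod ((Measure.pi νb).prod (Measure.pi νq))))
      ≤ ∫⁻ ω₀, ENNReal.ofReal (
          (2 * a ^ 2 * omg + (1 - a) ^ 2) * ‖g ω₀ - h ω₀‖ ^ 2
          + 4 * p * omg * ‖h ω₀ - φ0 ω₀‖ ^ 2
          + 2 * omg * (1 - p) * (∫ wb, ‖D ω₀ wb - (φ1 ω₀ - φ0 ω₀)‖ ^ 2 ∂(νb i))
          + 2 * omg * (1 + p) * ‖φ1 ω₀ - φ0 ω₀‖ ^ 2) ∂μ₀ := by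
  classical
  set M : Ω₀ × Bool × (∀ j, Ωb j) → E := fun u =>
    (if u.2.1 then φ1 u.1 else h u.1 + D u.1 (u.2.2 i)) - h u.1 - a • (g u.1 - h u.1)
    with hM
  have hFeq : ∀ w : Ω₀ × Bool × (∀ j, Ωb j) × (∀ j, Ωq j), F w =
      Qf (M (w.1, w.2.1, w.2.2.1)) (w.2.2.2 i) - M (w.1, w.2.1, w.2.2.1)
        + (1 - a) • (g w.1 - h w.1) := by
    intro w; rw [hF]
  -- measurability
  have hco : MeasurableSet {u : Ω₀ × Bool × (∀ j, Ωb j) | u.2.1 = true} :=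
    (measurable_fst.comp measurable_snd) (measurableSet_singleton true)
  have hite : Measurable (fun u : Ω₀ × Bool × (∀ j, Ωb j) =>
      if u.2.1 then φ1 u.1 else h u.1 + D u.1 (u.2.2 i)) :=
    Measurable.ite hco (hφ1.comp measurable_fst)
      ((hh.comp measurable_fst).add (hDm.comp (measurable_fst.prodMk
        ((measurable_pi_apply i).comp (measurable_snd.comp measurable_snd)))))
  have hMm : Measurable M := (hite.sub (hh.comp measurable_fst)).sub
    (((hg.comp measurable_fst).sub (hh.comp measurable_fst)).const_smul a)
  have hproj : Measurable (fun w : Ω₀ × Bool × (∀ j, Ωb j) × (∀ j, Ωq j) =>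
      (w.1, w.2.1, w.2.2.1)) :=
    measurable_fst.prodMk ((measurable_fst.comp measurable_snd).prodMk
      (measurable_fst.comp (measurable_snd.comp measurable_snd)))
  have hQpart : Measurable (fun w : Ω₀ × Bool × (∀ j, Ωb j) × (∀ j, Ωq j) =>
      Qf (M (w.1, w.2.1, w.2.2.1)) (w.2.2.2 i)) :=
    hQm.comp ((hMm.comp hproj).prodMk
      ((measurable_pi_apply i).comp (measurable_snd.comp (measurable_snd.comp measurable_snd))))
  have hGm : Measurable (fun w : Ω₀ × Bool × (∀ j, Ωb j) × (∀ j, Ωq j) =>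
      (1 - a) • (g w.1 - h w.1)) :=
    ((hg.comp measurable_fst).sub (hh.comp measurable_fst)).const_smul (1 - a)
  have hFm : Measurable (fun w : Ω₀ × Bool × (∀ j, Ωb j) × (∀ j, Ωq j) =>
      ENNReal.ofReal (‖Qf (M (w.1, w.2.1, w.2.2.1)) (w.2.2.2 i) - M (w.1, w.2.1, w.2.2.1)
        + (1 - a) • (g w.1 - h w.1)‖ ^ 2)) :=
    (((hQpart.sub (hMm.comp hproj)).add hGm).norm.pow_const 2).ennreal_ofReal
  simp only [hFeq]
  rw [lintegral_prod _ hFm.aemeasurable]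
  refine lintegral_mono fun ω₀ => ?_
  dsimp only
  refine (lintegral_prod _ ((hFm.comp measurable_prodMk_left).aemeasurable :
    AEMeasurable _ _)).trans_le ?_
  -- abbreviations
  set K : ℝ := (2 * a ^ 2 * omg + (1 - a) ^ 2) * ‖g ω₀ - h ω₀‖ ^ 2 with hK
  set A : ℝ := ‖φ1 ω₀ - φ0 ω₀‖ ^ 2 with hA
  set B : ℝ := ‖h ω₀ - φ0 ω₀‖ ^ 2 with hB
  set V : ℝ := ∫ wb, ‖D ω₀ wb - (φ1 ω₀ - φ0 ω₀)‖ ^ 2 ∂(νb i) with hV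
  have hKnn : 0 ≤ K := by positivity
  have hAnn : 0 ≤ A := by positivity
  have hBnn : 0 ≤ B := by positivity
  have hVnn : 0 ≤ V := integral_nonneg fun _ => by positivity
  -- innermost bound
  have hinner : ∀ (t : Bool) (wb : ∀ j, Ωb j),
      ∫⁻ wq, ENNReal.ofReal (‖Qf (M (ω₀, t, wb)) (wq i) - M (ω₀, t, wb)
          + (1 - a) • (g ω₀ - h ω₀)‖ ^ 2) ∂(Measure.pi νq)
        ≤ ENNReal.ofReal (2 * omg *
            ‖(if t then φ1 ω₀ else h ω₀ + D ω₀ (wb i)) - h ω₀‖ ^ 2 + K) := by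
    intro t wb
    have hm : Measurable fun x : Ωq i => ENNReal.ofReal (‖Qf (M (ω₀, t, wb)) x
        - M (ω₀, t, wb) + (1 - a) • (g ω₀ - h ω₀)‖ ^ 2) :=
      ((((hQm.comp (measurable_const.prodMk measurable_id)).sub
        measurable_const).add measurable_const).norm.pow_const 2).ennreal_ofReal
    calc ∫⁻ wq, ENNReal.ofReal (‖Qf (M (ω₀, t, wb)) (wq i) - M (ω₀, t, wb)
          + (1 - a) • (g ω₀ - h ω₀)‖ ^ 2) ∂(Measure.pi νq)
        = ∫⁻ x, ENNReal.ofReal (‖Qf (M (ω₀, t, wb)) x - M (ω₀, t, wb)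
          + (1 - a) • (g ω₀ - h ω₀)‖ ^ 2) ∂(νq i) := lintegral_pi_eval νq i _ hm
      _ ≤ ENNReal.ofReal (omg * ‖M (ω₀, t, wb)‖ ^ 2
          + ‖(1 - a) • (g ω₀ - h ω₀)‖ ^ 2) :=
          compress_bound (νq i) _ _ _ omg (hQint _) (hQint2 _) (hQub _) (hQvar _)
      _ ≤ _ := by
          apply ENNReal.ofReal_le_ofReal
          have := Mbound omg a homg
            ((if t then φ1 ω₀ else h ω₀ + D ω₀ (wb i)) - h ω₀) (g ω₀ - h ω₀)
          simp only [hM]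
          simpa [hK, sub_sub] using this
  set BT : ENNReal := ENNReal.ofReal (2 * omg * ‖φ1 ω₀ - h ω₀‖ ^ 2 + K) with hBT
  set BF : ENNReal := ENNReal.ofReal (2 * omg * (V + A) + K) with hBF
  have hψT : ∫⁻ y, ENNReal.ofReal (‖Qf (M (ω₀, true, y.1)) (y.2 i) - M (ω₀, true, y.1)
      + (1 - a) • (g ω₀ - h ω₀)‖ ^ 2) ∂((Measure.pi νb).prod (Measure.pi νq)) ≤ BT := by
    refine (lintegral_prod _ ((hFm.comp
      (measurable_prodMk_left.comp measurable_prodMk_left)).aemeasurable :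
      AEMeasurable _ _)).trans_le ?_
    refine le_trans (lintegral_mono fun wb => hinner true wb) ?_
    simp only [if_true]
    rw [lintegral_const, measure_univ, mul_one]
  have hψF : ∫⁻ y, ENNReal.ofReal (‖Qf (M (ω₀, false, y.1)) (y.2 i) - M (ω₀, false, y.1)
      + (1 - a) • (g ω₀ - h ω₀)‖ ^ 2) ∂((Measure.pi νb).prod (Measure.pi νq)) ≤ BF := by
    refine (lintegral_prod _ ((hFm.comp
      (measurable_prodMk_left.comp measurable_prodMk_left)).aemeasurable :
      AEMeasurable _ _)).trans_le ?_
    refine le_trans (lintegral_mono fun wb => hinner false wb) ?_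
    simp only [Bool.false_eq_true, if_false, add_sub_cancel_left]
    have hmD : Measurable fun x : Ωb i => ENNReal.ofReal (2 * omg * ‖D ω₀ x‖ ^ 2 + K) :=
      ((((hDm.comp (measurable_const.prodMk measurable_id)).norm.pow_const 2).const_mul
        (2 * omg)).add measurable_const).ennreal_ofReal
    rw [lintegral_pi_eval νb i _ hmD]
    have e : (fun x : Ωb i => ‖D ω₀ x‖ ^ 2)
        = fun x => ‖(D ω₀ x - (φ1 ω₀ - φ0 ω₀)) + (φ1 ω₀ - φ0 ω₀)‖ ^ 2 := by
      funext x; rw [sub_add_cancel]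
    have hXint : Integrable (fun x => D ω₀ x - (φ1 ω₀ - φ0 ω₀)) (νb i) :=
      (hDint ω₀).sub (integrable_const _)
    have hDD : Integrable (fun x => ‖D ω₀ x‖ ^ 2) (νb i) := by
      rw [e]; exact int_shift _ _ _ hXint (hDint2 ω₀)
    have hmean : ∫ x, (D ω₀ x - (φ1 ω₀ - φ0 ω₀)) ∂(νb i) = 0 := by
      rw [integral_sub (hDint ω₀) (integrable_const _), hDub, integral_const]; simp
    have hval : ∫ x, ‖D ω₀ x‖ ^ 2 ∂(νb i) = V + A := by
      rw [e, mean_shift _ _ _ hXint (hDint2 ω₀) hmean]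
    have hIfull : Integrable (fun x => 2 * omg * ‖D ω₀ x‖ ^ 2 + K) (νb i) :=
      (hDD.const_mul _).add (integrable_const _)
    rw [← ofReal_integral_eq_lintegral_ofReal hIfull (ae_of_all _ fun x => by positivity)]
    apply le_of_eq
    rw [integral_add (hDD.const_mul _) (integrable_const _), MeasureTheory.integral_const_mul,
      hval, integral_const, probReal_univ, one_smul, hBF]
  have hfalse : μc {false} = ENNReal.ofReal (1 - p) := by
    have h1 : ({true}ᶜ : Set Bool) = {false} := by
      ext x; cases x <;> simp
    rw [← h1, prob_compl_eq_one_sub (measurableSet_singleton true), hcoin,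
      ENNReal.ofReal_sub _ hp0.le, ENNReal.ofReal_one]
  calc ∫⁻ t, ∫⁻ y, ENNReal.ofReal (‖Qf (M (ω₀, t, y.1)) (y.2 i) - M (ω₀, t, y.1)
        + (1 - a) • (g ω₀ - h ω₀)‖ ^ 2) ∂((Measure.pi νb).prod (Measure.pi νq)) ∂μc
      ≤ ∫⁻ t, (if t then BT else BF) ∂μc := by
        refine lintegral_mono fun t => ?_
        cases t
        · simpa using hψF
        · simpa using hψT
    _ = BT * ENNReal.ofReal p + BF * ENNReal.ofReal (1 - p) := by
        rw [lintegral_bool, hcoin, hfalse]; simp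
    _ ≤ ENNReal.ofReal ((2 * a ^ 2 * omg + (1 - a) ^ 2) * ‖g ω₀ - h ω₀‖ ^ 2
          + 4 * p * omg * B + 2 * omg * (1 - p) * V + 2 * omg * (1 + p) * A) := by
        have h2omg : (0:ℝ) ≤ 2 * omg := by linarith
        have eT : (0:ℝ) ≤ 2 * omg * ‖φ1 ω₀ - h ω₀‖ ^ 2 + K :=
          add_nonneg (mul_nonneg h2omg (sq_nonneg _)) hKnn
        have eF : (0:ℝ) ≤ 2 * omg * (V + A) + K :=
          add_nonneg (mul_nonneg h2omg (add_nonneg hVnn hAnn)) hKnn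
        have e1 : BT * ENNReal.ofReal p
            = ENNReal.ofReal ((2 * omg * ‖φ1 ω₀ - h ω₀‖ ^ 2 + K) * p) := by
          rw [hBT, ENNReal.ofReal_mul eT]
        have e2 : BF * ENNReal.ofReal (1 - p)
            = ENNReal.ofReal ((2 * omg * (V + A) + K) * (1 - p)) := by
          rw [hBF, ENNReal.ofReal_mul eF]
        have e3 : (0:ℝ) ≤ (2 * omg * ‖φ1 ω₀ - h ω₀‖ ^ 2 + K) * p :=
          mul_nonneg eT hp0.le
        have e4 : (0:ℝ) ≤ (2 * omg * (V + A) + K) * (1 - p) :=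
          mul_nonneg eF (by linarith)
        rw [e1, e2, ← ENNReal.ofReal_add e3 e4]
        apply ENNReal.ofReal_le_ofReal
        have hub2 : ‖φ1 ω₀ - h ω₀‖ ^ 2 ≤ 2 * A + 2 * B := by
          have h1 := sq_add_le (φ1 ω₀ - φ0 ω₀) (φ0 ω₀ - h ω₀)
          rw [sub_add_sub_cancel] at h1
          simpa [hA, hB, norm_sub_rev (φ0 ω₀) (h ω₀)] using h1
        have hint1 : (0:ℝ) ≤ 2 * omg * p := by positivity
        nlinarith [mul_le_mul_of_nonneg_left hub2 hint1, hVnn, hAnn, hBnn, hKnn]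

end helpers

set_option maxHeartbeats 2000000 in
/-- Recursion for the individual compression errors in Byz-DASHA-PAGE. -/
theorem local_compression_error_recursion_byz_dasha_page
    {d : ℕ} {ι : Type*} [Fintype ι]
    -- local loss functions and their average
    (fS : ι → EuclideanSpace ℝ (Fin d) → ℝ)
    (f : EuclideanSpace ℝ (Fin d) → ℝ)
    (hf : ∀ x, f x = (1 / (Fintype.card ι : ℝ)) * ∑ i, fS i x)
    (hdiff : ∀ i, Differentiable ℝ (fS i))
    -- L-smoothness of f
    (L : ℝ) (hL : 0 ≤ L)
    (hsmooth : ∀ x y, ‖gradient f x - gradient f y‖ ≤ L * ‖x - y‖)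
    -- global Hessian variance
    (Lpm : ℝ) (hLpm : 0 ≤ Lpm)
    (hGH : ∀ x y, (1 / (Fintype.card ι : ℝ)) *
          ∑ i, ‖gradient (fS i) x - gradient (fS i) y‖ ^ 2
        - ‖gradient f x - gradient f y‖ ^ 2
      ≤ Lpm ^ 2 * ‖x - y‖ ^ 2)
    -- probability of full-gradient synchronization and momentum
    (p a : ℝ) (hp0 : 0 < p) (hp1 : p ≤ 1) (ha0 : 0 < a) (ha1 : a ≤ 1)
    -- past randomness
    {Ω₀ : Type*} [MeasurableSpace Ω₀] (μ₀ : Measure Ω₀) [IsProbabilityMeasure μ₀]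
    -- coin randomness (the same coin for all workers)
    (μc : Measure Bool) [IsProbabilityMeasure μc]
    (hcoin : μc {true} = ENNReal.ofReal p)
    -- mini-batch estimator randomness (independent across workers)
    {Ωb : ι → Type*} [∀ i, MeasurableSpace (Ωb i)]
    (νb : ∀ i, Measure (Ωb i)) [∀ i, IsProbabilityMeasure (νb i)]
    -- compressor randomness (independent across workers)
    {Ωq : ι → Type*} [∀ i, MeasurableSpace (Ωq i)]
    (νq : ∀ i, Measure (Ωq i)) [∀ i, IsProbabilityMeasure (νq i)]
    -- mini-batch estimators: conditionally unbiased, local Hessian variance with batch size b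
    (Dhat : (i : ι) → EuclideanSpace ℝ (Fin d) → EuclideanSpace ℝ (Fin d) →
      Ωb i → EuclideanSpace ℝ (Fin d))
    (hDmeas : ∀ i, Measurable fun q :
        (EuclideanSpace ℝ (Fin d) × EuclideanSpace ℝ (Fin d)) × Ωb i =>
        Dhat i q.1.1 q.1.2 q.2)
    (hDint : ∀ i x y, Integrable (fun wb => Dhat i x y wb) (νb i))
    (hDint2 : ∀ i x y, Integrable
      (fun wb => ‖Dhat i x y wb - (gradient (fS i) x - gradient (fS i) y)‖ ^ 2) (νb i))
    (hDunbiased : ∀ i x y,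
      ∫ wb, Dhat i x y wb ∂(νb i) = gradient (fS i) x - gradient (fS i) y)
    (b Lloc : ℝ) (hb : 0 < b) (hLloc : 0 ≤ Lloc)
    (hlocal : ∀ x y, (1 / (Fintype.card ι : ℝ)) *
        ∑ i, ∫ wb, ‖Dhat i x y wb - (gradient (fS i) x - gradient (fS i) y)‖ ^ 2 ∂(νb i)
      ≤ (Lloc ^ 2 / b) * ‖x - y‖ ^ 2)
    -- unbiased compressors with variance parameter ω
    (omg : ℝ) (homg : 0 ≤ omg)
    (Q : (i : ι) → EuclideanSpace ℝ (Fin d) → Ωq i → EuclideanSpace ℝ (Fin d))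
    (hQmeas : ∀ i, Measurable fun q : EuclideanSpace ℝ (Fin d) × Ωq i => Q i q.1 q.2)
    (hQint : ∀ i z, Integrable (fun wq => Q i z wq) (νq i))
    (hQint2 : ∀ i z, Integrable (fun wq => ‖Q i z wq - z‖ ^ 2) (νq i))
    (hQunbiased : ∀ i z, ∫ wq, Q i z wq ∂(νq i) = z)
    (hQvar : ∀ i z, ∫ wq, ‖Q i z wq - z‖ ^ 2 ∂(νq i) ≤ omg * ‖z‖ ^ 2)
    -- current iterates, estimators and shifts (measurable with respect to the past)
    (xt xt1 : Ω₀ → EuclideanSpace ℝ (Fin d))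
    (gt ht : ι → Ω₀ → EuclideanSpace ℝ (Fin d))
    (hxtm : Measurable xt) (hxt1m : Measurable xt1)
    (hgtm : ∀ i, Measurable (gt i)) (hhtm : ∀ i, Measurable (ht i))
    -- the new shifts: with probability p set to the full gradient,
    -- otherwise add a stochastic gradient difference
    (ht1 : ι → Ω₀ × Bool × (∀ i, Ωb i) × (∀ i, Ωq i) → EuclideanSpace ℝ (Fin d))
    (hht1 : ∀ i w, ht1 i w =
      if w.2.1 then gradient (fS i) (xt1 w.1)
      else ht i w.1 + Dhat i (xt1 w.1) (xt w.1) (w.2.2.1 i))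
    -- the new estimators: momentum variance reduction with compression
    (gt1 : ι → Ω₀ × Bool × (∀ i, Ωb i) × (∀ i, Ωq i) → EuclideanSpace ℝ (Fin d))
    (hgt1 : ∀ i w, gt1 i w =
      gt i w.1 + Q i (ht1 i w - ht i w.1 - a • (gt i w.1 - ht i w.1)) (w.2.2.2 i))
    -- integrability of the relevant squared norms
    (hint1 : ∀ i, Integrable
      (fun w : Ω₀ × Bool × (∀ i, Ωb i) × (∀ i, Ωq i) => ‖gt1 i w - ht1 i w‖ ^ 2)
      (μ₀.prod (μc.prod ((Measure.pi νb).prod (Measure.pi νq)))))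
    (hint2 : ∀ i, Integrable (fun ω₀ => ‖gt i ω₀ - ht i ω₀‖ ^ 2) μ₀)
    (hint3 : Integrable (fun ω₀ => ‖xt1 ω₀ - xt ω₀‖ ^ 2) μ₀)
    (hint4 : ∀ i, Integrable
      (fun ω₀ => ‖ht i ω₀ - gradient (fS i) (xt ω₀)‖ ^ 2) μ₀) :
    (1 / (Fintype.card ι : ℝ)) *
        ∑ i, ∫ w, ‖gt1 i w - ht1 i w‖ ^ 2
          ∂(μ₀.prod (μc.prod ((Measure.pi νb).prod (Measure.pi νq))))
      ≤ (2 * a ^ 2 * omg + (1 - a) ^ 2) *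
          ((1 / (Fintype.card ι : ℝ)) *
            ∑ i, ∫ ω₀, ‖gt i ω₀ - ht i ω₀‖ ^ 2 ∂μ₀)
        + 4 * p * omg *
            ((1 / (Fintype.card ι : ℝ)) *
              ∑ i, ∫ ω₀, ‖ht i ω₀ - gradient (fS i) (xt ω₀)‖ ^ 2 ∂μ₀)
        + 2 * omg * ((1 - p) * Lloc ^ 2 / b + 2 * (Lpm ^ 2 + L ^ 2)) *
            ∫ ω₀, ‖xt1 ω₀ - xt ω₀‖ ^ 2 ∂μ₀ := by
  classical
  have h1p : (0:ℝ) ≤ 1 - p := by linarith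
  have hc3nn : (0:ℝ) ≤ 2 * omg * ((1 - p) * Lloc ^ 2 / b + 2 * (Lpm ^ 2 + L ^ 2)) := by
    apply mul_nonneg (by linarith)
    have : (0:ℝ) ≤ (1 - p) * Lloc ^ 2 / b := by positivity
    positivity
  have hI3nn : (0:ℝ) ≤ ∫ ω₀, ‖xt1 ω₀ - xt ω₀‖ ^ 2 ∂μ₀ :=
    integral_nonneg fun _ => sq_nonneg _
  rcases isEmpty_or_nonempty ι with hemp | hne
  · simp only [univ_eq_empty, Finset.sum_empty, mul_zero, zero_add, add_zero]
    exact mul_nonneg hc3nn hI3nn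
  have hG : (0:ℝ) < (Fintype.card ι : ℝ) := by exact_mod_cast Fintype.card_pos
  have hGne : (Fintype.card ι : ℝ) ≠ 0 := ne_of_gt hG
  have hgm : ∀ i, Measurable (gradient (fS i)) := fun i => measurable_gradient _
  -- the per-worker bound
  have claimA : ∀ i, ∫⁻ w, ENNReal.ofReal (‖gt1 i w - ht1 i w‖ ^ 2)
        ∂(μ₀.prod (μc.prod ((Measure.pi νb).prod (Measure.pi νq))))
      ≤ ∫⁻ ω₀, ENNReal.ofReal (
          (2 * a ^ 2 * omg + (1 - a) ^ 2) * ‖gt i ω₀ - ht i ω₀‖ ^ 2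
          + 4 * p * omg * ‖ht i ω₀ - gradient (fS i) (xt ω₀)‖ ^ 2
          + 2 * omg * (1 - p) * (∫ wb, ‖Dhat i (xt1 ω₀) (xt ω₀) wb
              - (gradient (fS i) (xt1 ω₀) - gradient (fS i) (xt ω₀))‖ ^ 2 ∂(νb i))
          + 2 * omg * (1 + p) *
              ‖gradient (fS i) (xt1 ω₀) - gradient (fS i) (xt ω₀)‖ ^ 2) ∂μ₀ := by
    intro i
    refine claimA_aux μ₀ μc νb νq i p a omg hp0 hp1 homg hcoin
      (fun ω₀ => gradient (fS i) (xt1 ω₀)) (fun ω₀ => gradient (fS i) (xt ω₀))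
      (gt i) (ht i)
      ((hgm i).comp hxt1m) ((hgm i).comp hxtm) (hgtm i) (hhtm i)
      (fun ω₀ => Dhat i (xt1 ω₀) (xt ω₀))
      ((hDmeas i).comp (((hxt1m.comp measurable_fst).prodMk
        (hxtm.comp measurable_fst)).prodMk measurable_snd))
      (fun ω₀ => hDint i _ _) (fun ω₀ => hDint2 i _ _) (fun ω₀ => hDunbiased i _ _)
      (Q i) (hQmeas i) (hQint i) (hQint2 i) (hQunbiased i) (hQvar i)
      (fun w => gt1 i w - ht1 i w) ?_
    intro w
    rw [hgt1, hht1]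
    module
  -- measurability of the conditional local variance
  have hVm : ∀ i, Measurable (fun ω₀ => ∫ wb, ‖Dhat i (xt1 ω₀) (xt ω₀) wb
      - (gradient (fS i) (xt1 ω₀) - gradient (fS i) (xt ω₀))‖ ^ 2 ∂(νb i)) := by
    intro i
    have hsm : StronglyMeasurable (fun q : Ω₀ × Ωb i =>
        ‖Dhat i (xt1 q.1) (xt q.1) q.2
          - (gradient (fS i) (xt1 q.1) - gradient (fS i) (xt q.1))‖ ^ 2) :=
      (((((hDmeas i).comp (((hxt1m.comp measurable_fst).prodMk
          (hxtm.comp measurable_fst)).prodMk measurable_snd)).sub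
        (((hgm i).comp (hxt1m.comp measurable_fst)).sub
          ((hgm i).comp (hxtm.comp measurable_fst)))).norm.pow_const 2).stronglyMeasurable)
    exact hsm.integral_prod_right'.measurable
  have hVnn : ∀ i ω₀, (0:ℝ) ≤ ∫ wb, ‖Dhat i (xt1 ω₀) (xt ω₀) wb
      - (gradient (fS i) (xt1 ω₀) - gradient (fS i) (xt ω₀))‖ ^ 2 ∂(νb i) :=
    fun i ω₀ => integral_nonneg fun _ => sq_nonneg _
  have h2omg : (0:ℝ) ≤ 2 * omg := by linarith
  -- pointwise R and its properties
  have hRnn : ∀ (i : ι) (ω₀ : Ω₀), (0:ℝ) ≤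
      (2 * a ^ 2 * omg + (1 - a) ^ 2) * ‖gt i ω₀ - ht i ω₀‖ ^ 2
      + 4 * p * omg * ‖ht i ω₀ - gradient (fS i) (xt ω₀)‖ ^ 2
      + 2 * omg * (1 - p) * (∫ wb, ‖Dhat i (xt1 ω₀) (xt ω₀) wb
          - (gradient (fS i) (xt1 ω₀) - gradient (fS i) (xt ω₀))‖ ^ 2 ∂(νb i))
      + 2 * omg * (1 + p) *
          ‖gradient (fS i) (xt1 ω₀) - gradient (fS i) (xt ω₀)‖ ^ 2 := by
    intro i ω₀
    have := hVnn i ω₀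
    have h4 : (0:ℝ) ≤ 2 * omg * (1 - p) := mul_nonneg h2omg h1p
    have h5 : (0:ℝ) ≤ 2 * omg * (1 + p) := mul_nonneg h2omg (by linarith)
    have h6 : (0:ℝ) ≤ 4 * p * omg := by positivity
    nlinarith [sq_nonneg ‖gt i ω₀ - ht i ω₀‖, sq_nonneg ‖ht i ω₀ - gradient (fS i) (xt ω₀)‖,
      sq_nonneg ‖gradient (fS i) (xt1 ω₀) - gradient (fS i) (xt ω₀)‖,
      mul_nonneg h4 this,
      mul_nonneg h5 (sq_nonneg ‖gradient (fS i) (xt1 ω₀) - gradient (fS i) (xt ω₀)‖),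
      mul_nonneg h6 (sq_nonneg ‖ht i ω₀ - gradient (fS i) (xt ω₀)‖),
      mul_nonneg (by positivity : (0:ℝ) ≤ 2 * a ^ 2 * omg + (1 - a) ^ 2)
        (sq_nonneg ‖gt i ω₀ - ht i ω₀‖)]
  have hRm : ∀ i, Measurable (fun ω₀ => ENNReal.ofReal (
      (2 * a ^ 2 * omg + (1 - a) ^ 2) * ‖gt i ω₀ - ht i ω₀‖ ^ 2
      + 4 * p * omg * ‖ht i ω₀ - gradient (fS i) (xt ω₀)‖ ^ 2
      + 2 * omg * (1 - p) * (∫ wb, ‖Dhat i (xt1 ω₀) (xt ω₀) wb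
          - (gradient (fS i) (xt1 ω₀) - gradient (fS i) (xt ω₀))‖ ^ 2 ∂(νb i))
      + 2 * omg * (1 + p) *
          ‖gradient (fS i) (xt1 ω₀) - gradient (fS i) (xt ω₀)‖ ^ 2)) := by
    intro i
    apply Measurable.ennreal_ofReal
    exact ((((((hgtm i).sub (hhtm i)).norm.pow_const 2).const_mul _).add
      ((((hhtm i).sub ((hgm i).comp hxtm)).norm.pow_const 2).const_mul _)).add
      ((hVm i).const_mul _)).add
      (((((hgm i).comp hxt1m).sub ((hgm i).comp hxtm)).norm.pow_const 2).const_mul _)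
  -- pointwise sum bound
  have hsum : ∀ ω₀ : Ω₀, (∑ i, (
      (2 * a ^ 2 * omg + (1 - a) ^ 2) * ‖gt i ω₀ - ht i ω₀‖ ^ 2
      + 4 * p * omg * ‖ht i ω₀ - gradient (fS i) (xt ω₀)‖ ^ 2
      + 2 * omg * (1 - p) * (∫ wb, ‖Dhat i (xt1 ω₀) (xt ω₀) wb
          - (gradient (fS i) (xt1 ω₀) - gradient (fS i) (xt ω₀))‖ ^ 2 ∂(νb i))
      + 2 * omg * (1 + p) *
          ‖gradient (fS i) (xt1 ω₀) - gradient (fS i) (xt ω₀)‖ ^ 2))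
      ≤ (2 * a ^ 2 * omg + (1 - a) ^ 2) * (∑ i, ‖gt i ω₀ - ht i ω₀‖ ^ 2)
        + 4 * p * omg * (∑ i, ‖ht i ω₀ - gradient (fS i) (xt ω₀)‖ ^ 2)
        + (Fintype.card ι : ℝ) * (2 * omg * ((1 - p) * Lloc ^ 2 / b
            + 2 * (Lpm ^ 2 + L ^ 2))) * ‖xt1 ω₀ - xt ω₀‖ ^ 2 := by
    intro ω₀
    have hXnn : (0:ℝ) ≤ ‖xt1 ω₀ - xt ω₀‖ ^ 2 := sq_nonneg _
    have hsplit : (∑ i, (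
        (2 * a ^ 2 * omg + (1 - a) ^ 2) * ‖gt i ω₀ - ht i ω₀‖ ^ 2
        + 4 * p * omg * ‖ht i ω₀ - gradient (fS i) (xt ω₀)‖ ^ 2
        + 2 * omg * (1 - p) * (∫ wb, ‖Dhat i (xt1 ω₀) (xt ω₀) wb
            - (gradient (fS i) (xt1 ω₀) - gradient (fS i) (xt ω₀))‖ ^ 2 ∂(νb i))
        + 2 * omg * (1 + p) *
            ‖gradient (fS i) (xt1 ω₀) - gradient (fS i) (xt ω₀)‖ ^ 2))
        = (2 * a ^ 2 * omg + (1 - a) ^ 2) * (∑ i, ‖gt i ω₀ - ht i ω₀‖ ^ 2)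
          + 4 * p * omg * (∑ i, ‖ht i ω₀ - gradient (fS i) (xt ω₀)‖ ^ 2)
          + 2 * omg * (1 - p) * (∑ i, ∫ wb, ‖Dhat i (xt1 ω₀) (xt ω₀) wb
              - (gradient (fS i) (xt1 ω₀) - gradient (fS i) (xt ω₀))‖ ^ 2 ∂(νb i))
          + 2 * omg * (1 + p) *
              (∑ i, ‖gradient (fS i) (xt1 ω₀) - gradient (fS i) (xt ω₀)‖ ^ 2) := by
      rw [Finset.sum_add_distrib, Finset.sum_add_distrib, Finset.sum_add_distrib,
        ← Finset.mul_sum, ← Finset.mul_sum, ← Finset.mul_sum, ← Finset.mul_sum]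
    rw [hsplit]
    have hBV : (∑ i, ∫ wb, ‖Dhat i (xt1 ω₀) (xt ω₀) wb
        - (gradient (fS i) (xt1 ω₀) - gradient (fS i) (xt ω₀))‖ ^ 2 ∂(νb i))
        ≤ (Fintype.card ι : ℝ) * (Lloc ^ 2 / b * ‖xt1 ω₀ - xt ω₀‖ ^ 2) := by
      have h := hlocal (xt1 ω₀) (xt ω₀)
      rw [one_div, inv_mul_le_iff₀ hG] at h
      exact h
    have hBA : (∑ i, ‖gradient (fS i) (xt1 ω₀) - gradient (fS i) (xt ω₀)‖ ^ 2)
        ≤ (Fintype.card ι : ℝ) * ((Lpm ^ 2 + L ^ 2) * ‖xt1 ω₀ - xt ω₀‖ ^ 2) := by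
      have h := hGH (xt1 ω₀) (xt ω₀)
      have h3 := hsmooth (xt1 ω₀) (xt ω₀)
      have h4 : ‖gradient f (xt1 ω₀) - gradient f (xt ω₀)‖ ^ 2
          ≤ L ^ 2 * ‖xt1 ω₀ - xt ω₀‖ ^ 2 := by
        have h5 := pow_le_pow_left₀ (norm_nonneg _) h3 2
        rw [mul_pow] at h5
        exact h5
      have h6 : (1 / (Fintype.card ι : ℝ)) *
          (∑ i, ‖gradient (fS i) (xt1 ω₀) - gradient (fS i) (xt ω₀)‖ ^ 2)
          ≤ (Lpm ^ 2 + L ^ 2) * ‖xt1 ω₀ - xt ω₀‖ ^ 2 := by nlinarith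
      rw [one_div, inv_mul_le_iff₀ hG] at h6
      exact h6
    have t3 : 2 * omg * (1 - p) * (∑ i, ∫ wb, ‖Dhat i (xt1 ω₀) (xt ω₀) wb
        - (gradient (fS i) (xt1 ω₀) - gradient (fS i) (xt ω₀))‖ ^ 2 ∂(νb i))
        ≤ 2 * omg * (1 - p) * ((Fintype.card ι : ℝ) *
            (Lloc ^ 2 / b * ‖xt1 ω₀ - xt ω₀‖ ^ 2)) :=
      mul_le_mul_of_nonneg_left hBV (mul_nonneg h2omg h1p)
    have t4 : 2 * omg * (1 + p) *
        (∑ i, ‖gradient (fS i) (xt1 ω₀) - gradient (fS i) (xt ω₀)‖ ^ 2)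
        ≤ 2 * omg * (1 + p) * ((Fintype.card ι : ℝ) *
            ((Lpm ^ 2 + L ^ 2) * ‖xt1 ω₀ - xt ω₀‖ ^ 2)) :=
      mul_le_mul_of_nonneg_left hBA (mul_nonneg h2omg (by linarith))
    rw [mul_div_assoc]
    nlinarith [t3, t4, mul_nonneg (mul_nonneg (mul_nonneg (mul_nonneg homg hG.le) hXnn)
      (by positivity : (0:ℝ) ≤ Lpm ^ 2 + L ^ 2)) h1p]
  -- the W function and its integral
  have hS1int : Integrable (fun ω₀ => ∑ i, ‖gt i ω₀ - ht i ω₀‖ ^ 2) μ₀ :=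
    integrable_finset_sum _ fun i _ => hint2 i
  have hS2int : Integrable (fun ω₀ => ∑ i, ‖ht i ω₀ - gradient (fS i) (xt ω₀)‖ ^ 2) μ₀ :=
    integrable_finset_sum _ fun i _ => hint4 i
  have hWint : Integrable (fun ω₀ =>
      (2 * a ^ 2 * omg + (1 - a) ^ 2) * (∑ i, ‖gt i ω₀ - ht i ω₀‖ ^ 2)
      + 4 * p * omg * (∑ i, ‖ht i ω₀ - gradient (fS i) (xt ω₀)‖ ^ 2)
      + (Fintype.card ι : ℝ) * (2 * omg * ((1 - p) * Lloc ^ 2 / b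
          + 2 * (Lpm ^ 2 + L ^ 2))) * ‖xt1 ω₀ - xt ω₀‖ ^ 2) μ₀ :=
    ((hS1int.const_mul _).add (hS2int.const_mul _)).add (hint3.const_mul _)
  have hWnn : ∀ ω₀ : Ω₀, (0:ℝ) ≤
      (2 * a ^ 2 * omg + (1 - a) ^ 2) * (∑ i, ‖gt i ω₀ - ht i ω₀‖ ^ 2)
      + 4 * p * omg * (∑ i, ‖ht i ω₀ - gradient (fS i) (xt ω₀)‖ ^ 2)
      + (Fintype.card ι : ℝ) * (2 * omg * ((1 - p) * Lloc ^ 2 / b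
          + 2 * (Lpm ^ 2 + L ^ 2))) * ‖xt1 ω₀ - xt ω₀‖ ^ 2 := by
    intro ω₀
    have s1 : (0:ℝ) ≤ ∑ i, ‖gt i ω₀ - ht i ω₀‖ ^ 2 :=
      Finset.sum_nonneg fun i _ => sq_nonneg _
    have s2 : (0:ℝ) ≤ ∑ i, ‖ht i ω₀ - gradient (fS i) (xt ω₀)‖ ^ 2 :=
      Finset.sum_nonneg fun i _ => sq_nonneg _
    have s3 : (0:ℝ) ≤ (Fintype.card ι : ℝ) * (2 * omg * ((1 - p) * Lloc ^ 2 / b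
        + 2 * (Lpm ^ 2 + L ^ 2))) := mul_nonneg hG.le hc3nn
    have := mul_nonneg s3 (sq_nonneg ‖xt1 ω₀ - xt ω₀‖)
    have := mul_nonneg (by positivity : (0:ℝ) ≤ 2 * a ^ 2 * omg + (1 - a) ^ 2) s1
    have := mul_nonneg (by positivity : (0:ℝ) ≤ 4 * p * omg) s2
    linarith
  -- the ENNReal chain
  have key : ENNReal.ofReal (∑ i, ∫ w, ‖gt1 i w - ht1 i w‖ ^ 2
        ∂(μ₀.prod (μc.prod ((Measure.pi νb).prod (Measure.pi νq)))))
      ≤ ENNReal.ofReal (∫ ω₀, (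
        (2 * a ^ 2 * omg + (1 - a) ^ 2) * (∑ i, ‖gt i ω₀ - ht i ω₀‖ ^ 2)
        + 4 * p * omg * (∑ i, ‖ht i ω₀ - gradient (fS i) (xt ω₀)‖ ^ 2)
        + (Fintype.card ι : ℝ) * (2 * omg * ((1 - p) * Lloc ^ 2 / b
            + 2 * (Lpm ^ 2 + L ^ 2))) * ‖xt1 ω₀ - xt ω₀‖ ^ 2) ∂μ₀) := by
    rw [ENNReal.ofReal_sum_of_nonneg (fun i _ => integral_nonneg fun w => sq_nonneg _)]
    calc ∑ i, ENNReal.ofReal (∫ w, ‖gt1 i w - ht1 i w‖ ^ 2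
          ∂(μ₀.prod (μc.prod ((Measure.pi νb).prod (Measure.pi νq)))))
        = ∑ i, ∫⁻ w, ENNReal.ofReal (‖gt1 i w - ht1 i w‖ ^ 2)
            ∂(μ₀.prod (μc.prod ((Measure.pi νb).prod (Measure.pi νq)))) :=
          Finset.sum_congr rfl fun i _ => ofReal_integral_eq_lintegral_ofReal
            (hint1 i) (ae_of_all _ fun w => sq_nonneg _)
      _ ≤ ∑ i, ∫⁻ ω₀, ENNReal.ofReal (
            (2 * a ^ 2 * omg + (1 - a) ^ 2) * ‖gt i ω₀ - ht i ω₀‖ ^ 2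
            + 4 * p * omg * ‖ht i ω₀ - gradient (fS i) (xt ω₀)‖ ^ 2
            + 2 * omg * (1 - p) * (∫ wb, ‖Dhat i (xt1 ω₀) (xt ω₀) wb
                - (gradient (fS i) (xt1 ω₀) - gradient (fS i) (xt ω₀))‖ ^ 2 ∂(νb i))
            + 2 * omg * (1 + p) *
                ‖gradient (fS i) (xt1 ω₀) - gradient (fS i) (xt ω₀)‖ ^ 2) ∂μ₀ :=
          Finset.sum_le_sum fun i _ => claimA i
      _ = ∫⁻ ω₀, ∑ i, ENNReal.ofReal (
            (2 * a ^ 2 * omg + (1 - a) ^ 2) * ‖gt i ω₀ - ht i ω₀‖ ^ 2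
            + 4 * p * omg * ‖ht i ω₀ - gradient (fS i) (xt ω₀)‖ ^ 2
            + 2 * omg * (1 - p) * (∫ wb, ‖Dhat i (xt1 ω₀) (xt ω₀) wb
                - (gradient (fS i) (xt1 ω₀) - gradient (fS i) (xt ω₀))‖ ^ 2 ∂(νb i))
            + 2 * omg * (1 + p) *
                ‖gradient (fS i) (xt1 ω₀) - gradient (fS i) (xt ω₀)‖ ^ 2) ∂μ₀ :=
          (lintegral_finset_sum _ fun i _ => hRm i).symm
      _ ≤ ∫⁻ ω₀, ENNReal.ofReal (
            (2 * a ^ 2 * omg + (1 - a) ^ 2) * (∑ i, ‖gt i ω₀ - ht i ω₀‖ ^ 2)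
            + 4 * p * omg * (∑ i, ‖ht i ω₀ - gradient (fS i) (xt ω₀)‖ ^ 2)
            + (Fintype.card ι : ℝ) * (2 * omg * ((1 - p) * Lloc ^ 2 / b
                + 2 * (Lpm ^ 2 + L ^ 2))) * ‖xt1 ω₀ - xt ω₀‖ ^ 2) ∂μ₀ := by
          refine lintegral_mono fun ω₀ => ?_
          rw [← ENNReal.ofReal_sum_of_nonneg (fun i _ => hRnn i ω₀)]
          exact ENNReal.ofReal_le_ofReal (hsum ω₀)
      _ = ENNReal.ofReal (∫ ω₀, (
            (2 * a ^ 2 * omg + (1 - a) ^ 2) * (∑ i, ‖gt i ω₀ - ht i ω₀‖ ^ 2)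
            + 4 * p * omg * (∑ i, ‖ht i ω₀ - gradient (fS i) (xt ω₀)‖ ^ 2)
            + (Fintype.card ι : ℝ) * (2 * omg * ((1 - p) * Lloc ^ 2 / b
                + 2 * (Lpm ^ 2 + L ^ 2))) * ‖xt1 ω₀ - xt ω₀‖ ^ 2) ∂μ₀) :=
          (ofReal_integral_eq_lintegral_ofReal hWint (ae_of_all _ hWnn)).symm
  have hWnnI : (0:ℝ) ≤ ∫ ω₀, (
      (2 * a ^ 2 * omg + (1 - a) ^ 2) * (∑ i, ‖gt i ω₀ - ht i ω₀‖ ^ 2)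
      + 4 * p * omg * (∑ i, ‖ht i ω₀ - gradient (fS i) (xt ω₀)‖ ^ 2)
      + (Fintype.card ι : ℝ) * (2 * omg * ((1 - p) * Lloc ^ 2 / b
          + 2 * (Lpm ^ 2 + L ^ 2))) * ‖xt1 ω₀ - xt ω₀‖ ^ 2) ∂μ₀ :=
    integral_nonneg hWnn
  have hreal : (∑ i, ∫ w, ‖gt1 i w - ht1 i w‖ ^ 2
        ∂(μ₀.prod (μc.prod ((Measure.pi νb).prod (Measure.pi νq)))))
      ≤ ∫ ω₀, (
        (2 * a ^ 2 * omg + (1 - a) ^ 2) * (∑ i, ‖gt i ω₀ - ht i ω₀‖ ^ 2)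
        + 4 * p * omg * (∑ i, ‖ht i ω₀ - gradient (fS i) (xt ω₀)‖ ^ 2)
        + (Fintype.card ι : ℝ) * (2 * omg * ((1 - p) * Lloc ^ 2 / b
            + 2 * (Lpm ^ 2 + L ^ 2))) * ‖xt1 ω₀ - xt ω₀‖ ^ 2) ∂μ₀ :=
    (ENNReal.ofReal_le_ofReal_iff hWnnI).mp key
  have hWval : (∫ ω₀, (
      (2 * a ^ 2 * omg + (1 - a) ^ 2) * (∑ i, ‖gt i ω₀ - ht i ω₀‖ ^ 2)
      + 4 * p * omg * (∑ i, ‖ht i ω₀ - gradient (fS i) (xt ω₀)‖ ^ 2)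
      + (Fintype.card ι : ℝ) * (2 * omg * ((1 - p) * Lloc ^ 2 / b
          + 2 * (Lpm ^ 2 + L ^ 2))) * ‖xt1 ω₀ - xt ω₀‖ ^ 2) ∂μ₀)
      = (2 * a ^ 2 * omg + (1 - a) ^ 2) * (∑ i, ∫ ω₀, ‖gt i ω₀ - ht i ω₀‖ ^ 2 ∂μ₀)
        + 4 * p * omg * (∑ i, ∫ ω₀, ‖ht i ω₀ - gradient (fS i) (xt ω₀)‖ ^ 2 ∂μ₀)
        + (Fintype.card ι : ℝ) * (2 * omg * ((1 - p) * Lloc ^ 2 / b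
            + 2 * (Lpm ^ 2 + L ^ 2))) * (∫ ω₀, ‖xt1 ω₀ - xt ω₀‖ ^ 2 ∂μ₀) := by
    have eA : (∫ ω₀, (
        ((2 * a ^ 2 * omg + (1 - a) ^ 2) * (∑ i, ‖gt i ω₀ - ht i ω₀‖ ^ 2)
        + 4 * p * omg * (∑ i, ‖ht i ω₀ - gradient (fS i) (xt ω₀)‖ ^ 2))
        + (Fintype.card ι : ℝ) * (2 * omg * ((1 - p) * Lloc ^ 2 / b
            + 2 * (Lpm ^ 2 + L ^ 2))) * ‖xt1 ω₀ - xt ω₀‖ ^ 2) ∂μ₀)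
        = (∫ ω₀, ((2 * a ^ 2 * omg + (1 - a) ^ 2) * (∑ i, ‖gt i ω₀ - ht i ω₀‖ ^ 2)
            + 4 * p * omg * (∑ i, ‖ht i ω₀ - gradient (fS i) (xt ω₀)‖ ^ 2)) ∂μ₀)
          + ∫ ω₀, (Fintype.card ι : ℝ) * (2 * omg * ((1 - p) * Lloc ^ 2 / b
              + 2 * (Lpm ^ 2 + L ^ 2))) * ‖xt1 ω₀ - xt ω₀‖ ^ 2 ∂μ₀ :=
      integral_add ((hS1int.const_mul _).add (hS2int.const_mul _)) (hint3.const_mul _)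
    have eB : (∫ ω₀, ((2 * a ^ 2 * omg + (1 - a) ^ 2) * (∑ i, ‖gt i ω₀ - ht i ω₀‖ ^ 2)
          + 4 * p * omg * (∑ i, ‖ht i ω₀ - gradient (fS i) (xt ω₀)‖ ^ 2)) ∂μ₀)
        = (∫ ω₀, (2 * a ^ 2 * omg + (1 - a) ^ 2) * (∑ i, ‖gt i ω₀ - ht i ω₀‖ ^ 2) ∂μ₀)
          + ∫ ω₀, 4 * p * omg * (∑ i, ‖ht i ω₀ - gradient (fS i) (xt ω₀)‖ ^ 2) ∂μ₀ :=
      integral_add (hS1int.const_mul _) (hS2int.const_mul _)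
    rw [eA, eB, MeasureTheory.integral_const_mul, MeasureTheory.integral_const_mul,
      MeasureTheory.integral_const_mul,
      integral_finset_sum _ (fun i _ => hint2 i), integral_finset_sum _ (fun i _ => hint4 i)]
  rw [hWval] at hreal
  have hfin := mul_le_mul_of_nonneg_left hreal
    (by positivity : (0:ℝ) ≤ 1 / (Fintype.card ι : ℝ))
  calc (1 / (Fintype.card ι : ℝ)) * ∑ i, ∫ w, ‖gt1 i w - ht1 i w‖ ^ 2
        ∂(μ₀.prod (μc.prod ((Measure.pi νb).prod (Measure.pi νq)))) ≤ _ := hfin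
    _ = (2 * a ^ 2 * omg + (1 - a) ^ 2) *
          ((1 / (Fintype.card ι : ℝ)) * ∑ i, ∫ ω₀, ‖gt i ω₀ - ht i ω₀‖ ^ 2 ∂μ₀)
        + 4 * p * omg * ((1 / (Fintype.card ι : ℝ)) *
            ∑ i, ∫ ω₀, ‖ht i ω₀ - gradient (fS i) (xt ω₀)‖ ^ 2 ∂μ₀)
        + 2 * omg * ((1 - p) * Lloc ^ 2 / b + 2 * (Lpm ^ 2 + L ^ 2)) *
            ∫ ω₀, ‖xt1 ω₀ - xt ω₀‖ ^ 2 ∂μ₀ := by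
      field_simp
end

section
/- (Recursion for the mean shift error in Byz-DASHA-PAGE.) Suppose h_i^{t+1} = ∇f_i(x^{t+1}) with probability p (same coin for all i) and h_i^{t+1} = h_i^t + Δ̂_i(x^{t+1}, x^t) otherwise, where the Δ̂_i are conditionally unbiased mini-batch estimators with batch size b satisfying the local Hessian variance bound and are mutually independent given (x^t, x^{t+1}, {h_i^t}). Then with h^s = (1/G) Σ_{i∈𝒢} h_i^s: E‖h^{t+1} − ∇f(x^{t+1})‖² ≤ (1−p)·E‖h^t − ∇f(x^t)‖² + ((1−p)𝓛±²/(Gb))·E‖x^{t+1} − x^t‖². -/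
open MeasureTheory Finset
open scoped ENNReal

local notation "⟪" x ", " y "⟫" => @inner ℝ _ _ x y

set_option maxHeartbeats 1000000

section Helpers

variable {ιh : Type*} [Fintype ιh] {X : ιh → Type*} [∀ i, MeasurableSpace (X i)]
  (ν : ∀ i, Measure (X i)) [∀ i, IsProbabilityMeasure (ν i)] {d : ℕ}

lemma pi_mp_eval (i : ιh) :
    MeasurePreserving (fun w : ∀ j, X j => w i) (Measure.pi ν) (ν i) := by
  classical
  refine ⟨measurable_pi_apply i, ?_⟩
  ext s hs
  rw [Measure.map_apply (measurable_pi_apply i) hs,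
    show (fun w : ∀ j, X j => w i) ⁻¹' s
      = Set.pi Set.univ (Function.update (fun j => (Set.univ : Set (X j))) i s) from
      Set.eval_preimage, Measure.pi_pi]
  rw [Finset.prod_eq_single i (fun j _ hj => by
    simp [Function.update_of_ne hj]) (by simp)]
  simp

lemma pi_mp_pair {i j : ιh} (hij : i ≠ j) :
    MeasurePreserving (fun w : ∀ k, X k => (w i, w j)) (Measure.pi ν)
      ((ν i).prod (ν j)) := by
  classical
  refine ⟨(measurable_pi_apply i).prodMk (measurable_pi_apply j), ?_⟩
  refine (Measure.prod_eq (μ := ν i) (ν := ν j) fun s t hs ht => ?_).symm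
  rw [Measure.map_apply ((measurable_pi_apply i).prodMk (measurable_pi_apply j)) (hs.prod ht)]
  have hpre : (fun w : ∀ k, X k => (w i, w j)) ⁻¹' (s ×ˢ t)
      = Set.pi Set.univ
          (Function.update (Function.update (fun k => (Set.univ : Set (X k))) i s) j t) := by
    ext w
    simp only [Set.mem_preimage, Set.mem_prod, Set.mem_pi, Set.mem_univ, true_implies]
    constructor
    · rintro ⟨h1, h2⟩ k
      rcases eq_or_ne k j with rfl | hkj
      · simpa using h2
      rcases eq_or_ne k i with rfl | hki
      · simpa [Function.update_of_ne hkj, Function.update_self] using h1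
      · simp [Function.update_of_ne hkj, Function.update_of_ne hki]
    · intro hw
      refine ⟨?_, ?_⟩
      · simpa [Function.update_of_ne hij, Function.update_self] using hw i
      · simpa using hw j
  rw [hpre, Measure.pi_pi]
  rw [← Finset.prod_subset (Finset.subset_univ ({i, j} : Finset ιh)) (fun k _ hk => ?_),
    Finset.prod_pair hij]
  · rw [Function.update_of_ne hij, Function.update_self, Function.update_self]
  · have hki : k ≠ i := fun h => hk (by simp [h])
    have hkj : k ≠ j := fun h => hk (by simp [h])
    simp [Function.update_of_ne hki, Function.update_of_ne hkj]

lemma pi_integrable_eval {E : Type*} [NormedAddCommGroup E]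
    {i : ιh} {g : X i → E} (hgm : AEStronglyMeasurable g (ν i)) (hg : Integrable g (ν i)) :
    Integrable (fun w : ∀ j, X j => g (w i)) (Measure.pi ν) := by
  have h := (pi_mp_eval (X := X) ν i).map_eq
  exact (integrable_map_measure (f := fun w : ∀ j, X j => w i) (g := g)
    (by rwa [h]) (measurable_pi_apply i).aemeasurable).mp (by rwa [h])

lemma pi_integral_eval {E : Type*} [NormedAddCommGroup E] [NormedSpace ℝ E]
    {i : ιh} {g : X i → E} (hgm : AEStronglyMeasurable g (ν i)) :
    ∫ w : ∀ j, X j, g (w i) ∂(Measure.pi ν) = ∫ x, g x ∂(ν i) := by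
  have h := (pi_mp_eval (X := X) ν i).map_eq
  rw [← h, integral_map (measurable_pi_apply i).aemeasurable (by rwa [h])]

lemma euclid_inner_eq (a c : EuclideanSpace ℝ (Fin d)) : ⟪a, c⟫ = ∑ k, a k * c k := by
  simp [PiLp.inner_apply, RCLike.inner_apply, conj_trivial]
  exact Finset.sum_congr rfl fun k _ => mul_comm _ _

lemma integrable_coord {α : Type*} [MeasurableSpace α] {μ : Measure α}
    {f : α → EuclideanSpace ℝ (Fin d)} (hf : Integrable f μ) (k : Fin d) :
    Integrable (fun a => f a k) μ := by
  have := (EuclideanSpace.proj (𝕜 := ℝ) k).integrable_comp hf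
  simpa using this

lemma integral_coord {α : Type*} [MeasurableSpace α] {μ : Measure α}
    {f : α → EuclideanSpace ℝ (Fin d)} (hf : Integrable f μ) (k : Fin d) :
    ∫ a, f a k ∂μ = (∫ a, f a ∂μ) k := by
  have := (EuclideanSpace.proj (𝕜 := ℝ) k).integral_comp_comm hf
  simpa using this

lemma integrable_inner_prod {α β : Type*} [MeasurableSpace α] [MeasurableSpace β]
    {μ : Measure α} {ν' : Measure β} [SigmaFinite μ] [SigmaFinite ν']
    {f : α → EuclideanSpace ℝ (Fin d)} {g : β → EuclideanSpace ℝ (Fin d)}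
    (hf : Integrable f μ) (hg : Integrable g ν') :
    Integrable (fun z : α × β => ⟪f z.1, g z.2⟫) (μ.prod ν') := by
  have h : (fun z : α × β => ⟪f z.1, g z.2⟫)
      = fun z : α × β => ∑ k, (fun a => f a k) z.1 * (fun b0 => g b0 k) z.2 := by
    funext z; exact euclid_inner_eq _ _
  rw [h]
  exact integrable_finset_sum _ fun k _ =>
    Integrable.mul_prod (integrable_coord hf k) (integrable_coord hg k)

lemma integral_inner_prod {α β : Type*} [MeasurableSpace α] [MeasurableSpace β]
    {μ : Measure α} {ν' : Measure β} [SigmaFinite μ] [SigmaFinite ν']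
    {f : α → EuclideanSpace ℝ (Fin d)} {g : β → EuclideanSpace ℝ (Fin d)}
    (hf : Integrable f μ) (hg : Integrable g ν') :
    ∫ z, ⟪f z.1, g z.2⟫ ∂(μ.prod ν') = ⟪∫ a, f a ∂μ, ∫ b0, g b0 ∂ν'⟫ := by
  calc ∫ z, ⟪f z.1, g z.2⟫ ∂(μ.prod ν')
      = ∫ z, ∑ k, (fun a => f a k) z.1 * (fun b0 => g b0 k) z.2 ∂(μ.prod ν') := by
        refine integral_congr_ae (Filter.Eventually.of_forall fun z => ?_)
        exact euclid_inner_eq _ _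
    _ = ∑ k, ∫ z, (fun a => f a k) z.1 * (fun b0 => g b0 k) z.2 ∂(μ.prod ν') :=
        integral_finset_sum _ fun k _ =>
          Integrable.mul_prod (integrable_coord hf k) (integrable_coord hg k)
    _ = ∑ k, (∫ a, f a k ∂μ) * (∫ b0, g b0 k ∂ν') :=
        Finset.sum_congr rfl fun k _ =>
          integral_prod_mul (f := fun a => f a k) (g := fun b0 => g b0 k)
    _ = ⟪∫ a, f a ∂μ, ∫ b0, g b0 ∂ν'⟫ := by
        rw [euclid_inner_eq]
        exact Finset.sum_congr rfl fun k _ => by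
          rw [integral_coord hf k, integral_coord hg k]

lemma pi_second_moment (Z : ∀ i, X i → EuclideanSpace ℝ (Fin d))
    (hZm : ∀ i, Measurable (Z i)) (hZ1 : ∀ i, Integrable (Z i) (ν i))
    (hZ2 : ∀ i, Integrable (fun x => ‖Z i x‖ ^ 2) (ν i))
    (hZ0 : ∀ i, ∫ x, Z i x ∂(ν i) = 0) (M : EuclideanSpace ℝ (Fin d)) :
    Integrable (fun w : ∀ j, X j => ‖M + ∑ i, Z i (w i)‖ ^ 2) (Measure.pi ν) ∧
      ∫ w : ∀ j, X j, ‖M + ∑ i, Z i (w i)‖ ^ 2 ∂(Measure.pi ν)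
        = ‖M‖ ^ 2 + ∑ i, ∫ x, ‖Z i x‖ ^ 2 ∂(ν i) := by
  classical
  set π := Measure.pi ν with hπ
  have hT : ∀ i j, Integrable (fun w : ∀ k, X k => ⟪Z i (w i), Z j (w j)⟫) π := by
    intro i j
    rcases eq_or_ne i j with rfl | hij
    · have : (fun w : ∀ k, X k => ⟪Z i (w i), Z i (w i)⟫)
          = fun w : ∀ k, X k => (fun x => ‖Z i x‖ ^ 2) (w i) := by
        funext w; exact real_inner_self_eq_norm_sq _
      rw [this]
      exact pi_integrable_eval ν (hZ2 i).aestronglyMeasurable (hZ2 i)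
    · have P := pi_mp_pair (X := X) ν hij
      have hint : Integrable (fun z : X i × X j => ⟪Z i z.1, Z j z.2⟫) ((ν i).prod (ν j)) :=
        integrable_inner_prod (hZ1 i) (hZ1 j)
      have hAESM : AEStronglyMeasurable (fun z : X i × X j => ⟪Z i z.1, Z j z.2⟫)
          (Measure.map (fun w : ∀ k, X k => (w i, w j)) π) := by
        rw [P.map_eq]
        exact (Measurable.inner ((hZm i).comp measurable_fst)
          ((hZm j).comp measurable_snd)).aestronglyMeasurable
      exact (integrable_map_measure hAESM P.measurable.aemeasurable).mp
        (by rwa [P.map_eq])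
  have hTval : ∀ i j, i ≠ j → ∫ w, ⟪Z i (w i), Z j (w j)⟫ ∂π = 0 := by
    intro i j hij
    have P := pi_mp_pair (X := X) ν hij
    have hAESM : AEStronglyMeasurable (fun z : X i × X j => ⟪Z i z.1, Z j z.2⟫)
        (Measure.map (fun w : ∀ k, X k => (w i, w j)) π) := by
      rw [P.map_eq]
      exact (Measurable.inner ((hZm i).comp measurable_fst)
        ((hZm j).comp measurable_snd)).aestronglyMeasurable
    have h1 : ∫ w, ⟪Z i (w i), Z j (w j)⟫ ∂π
        = ∫ z : X i × X j, ⟪Z i z.1, Z j z.2⟫ ∂((ν i).prod (ν j)) := by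
      rw [← P.map_eq, integral_map P.measurable.aemeasurable hAESM]
    rw [h1, integral_inner_prod (hZ1 i) (hZ1 j), hZ0 i, hZ0 j]
    simp
  have hSq : (fun w : ∀ k, X k => ‖∑ i, Z i (w i)‖ ^ 2)
      = fun w : ∀ k, X k => ∑ i, ∑ j, ⟪Z i (w i), Z j (w j)⟫ := by
    funext w
    rw [← real_inner_self_eq_norm_sq, sum_inner]
    exact Finset.sum_congr rfl fun i _ => inner_sum _ _ _
  have hSqInt : Integrable (fun w : ∀ k, X k => ‖∑ i, Z i (w i)‖ ^ 2) π := by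
    rw [hSq]
    exact integrable_finset_sum _ fun i _ => integrable_finset_sum _ fun j _ => hT i j
  have hSqVal : ∫ w, ‖∑ i, Z i (w i)‖ ^ 2 ∂π = ∑ i, ∫ x, ‖Z i x‖ ^ 2 ∂(ν i) := by
    rw [hSq, integral_finset_sum _ fun i _ => integrable_finset_sum _ fun j _ => hT i j]
    refine Finset.sum_congr rfl fun i _ => ?_
    rw [integral_finset_sum _ fun j _ => hT i j]
    rw [Finset.sum_eq_single i (fun j _ hj => hTval i j (Ne.symm hj)) (by simp)]
    have : (fun w : ∀ k, X k => ⟪Z i (w i), Z i (w i)⟫)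
        = fun w : ∀ k, X k => (fun x => ‖Z i x‖ ^ 2) (w i) := by
      funext w; exact real_inner_self_eq_norm_sq _
    rw [this, pi_integral_eval ν (hZ2 i).aestronglyMeasurable]
  have hLin : (fun w : ∀ k, X k => ⟪M, ∑ i, Z i (w i)⟫)
      = fun w : ∀ k, X k => ∑ i, (fun x => ⟪M, Z i x⟫) (w i) := by
    funext w; exact inner_sum _ _ _
  have hLinInt : Integrable (fun w : ∀ k, X k => ⟪M, ∑ i, Z i (w i)⟫) π := by
    rw [hLin]
    exact integrable_finset_sum _ fun i _ =>
      pi_integrable_eval ν (i := i) (g := fun x => ⟪M, Z i x⟫) ((hZ1 i).const_inner M).aestronglyMeasurable ((hZ1 i).const_inner M)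
  have hLinVal : ∫ w, ⟪M, ∑ i, Z i (w i)⟫ ∂π = 0 := by
    rw [hLin, integral_finset_sum _ fun i _ =>
      pi_integrable_eval ν (i := i) (g := fun x => ⟪M, Z i x⟫) ((hZ1 i).const_inner M).aestronglyMeasurable ((hZ1 i).const_inner M)]
    refine Finset.sum_eq_zero fun i _ => ?_
    rw [pi_integral_eval ν (i := i) (g := fun x => ⟪M, Z i x⟫) ((hZ1 i).const_inner M).aestronglyMeasurable,
      integral_inner (hZ1 i) M, hZ0 i]
    simp
  have hexp : (fun w : ∀ k, X k => ‖M + ∑ i, Z i (w i)‖ ^ 2)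
      = fun w : ∀ k, X k =>
        ‖M‖ ^ 2 + 2 * ⟪M, ∑ i, Z i (w i)⟫ + ‖∑ i, Z i (w i)‖ ^ 2 := by
    funext w; exact norm_add_sq_real _ _
  have hInt : Integrable (fun w : ∀ k, X k => ‖M + ∑ i, Z i (w i)‖ ^ 2) π := by
    rw [hexp]
    exact ((integrable_const _).add (hLinInt.const_mul 2)).add hSqInt
  refine ⟨hInt, ?_⟩
  have h1 : Integrable (fun w : ∀ k, X k => ‖M‖ ^ 2 + 2 * ⟪M, ∑ i, Z i (w i)⟫) π :=
    (integrable_const _).add (hLinInt.const_mul 2)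
  rw [hexp, integral_add h1 hSqInt,
    integral_add (integrable_const (‖M‖ ^ 2)) (hLinInt.const_mul 2),
    integral_const_mul, hLinVal, hSqVal, integral_const]
  simp

end Helpers

section MeasDecomp

variable {α β : Type*} [MeasurableSpace α] [MeasurableSpace β]

lemma smul_prod_left' (c : ℝ≥0∞) (μ : Measure α) (ν : Measure β) [SFinite ν] :
    (c • μ).prod ν = c • μ.prod ν := by
  ext s hs
  rw [Measure.prod_apply hs, Measure.smul_apply, smul_eq_mul,
    Measure.prod_apply hs, lintegral_smul_measure, smul_eq_mul]

lemma smul_prod_right' (c : ℝ≥0∞) (μ : Measure α) (ν : Measure β) [SFinite ν] :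
    μ.prod (c • ν) = c • μ.prod ν := by
  ext s hs
  rw [Measure.prod_apply hs, Measure.smul_apply, smul_eq_mul, Measure.prod_apply hs]
  simp_rw [Measure.smul_apply, smul_eq_mul]
  rw [lintegral_const_mul _ (measurable_measure_prodMk_left hs)]

lemma bool_meas_decomp (μc : Measure Bool) [IsProbabilityMeasure μc] :
    μc = μc {true} • Measure.dirac true + μc {false} • Measure.dirac false := by
  conv_lhs => rw [← Measure.sum_smul_dirac μc]
  rw [Measure.sum_bool]

end MeasDecomp

lemma gradient_avg {d : ℕ} {ι : Type*} [Fintype ι]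
    (fS : ι → EuclideanSpace ℝ (Fin d) → ℝ) (f : EuclideanSpace ℝ (Fin d) → ℝ)
    (hf : ∀ x, f x = (1 / (Fintype.card ι : ℝ)) * ∑ i, fS i x)
    (hdiff : ∀ i, Differentiable ℝ (fS i)) (x : EuclideanSpace ℝ (Fin d)) :
    gradient f x = (Fintype.card ι : ℝ)⁻¹ • ∑ i, gradient (fS i) x := by
  have hfe : f = fun y => (1 / (Fintype.card ι : ℝ)) * ∑ i, fS i y := funext hf
  have hF : HasFDerivAt f
      ((1 / (Fintype.card ι : ℝ)) • ∑ i, fderiv ℝ (fS i) x) x := by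
    rw [hfe]
    exact (HasFDerivAt.fun_sum (fun i _ => ((hdiff i) x).hasFDerivAt)).const_mul _
  have hGr : HasGradientAt f ((Fintype.card ι : ℝ)⁻¹ • ∑ i, gradient (fS i) x) x := by
    rw [hasGradientAt_iff_hasFDerivAt]
    have : (InnerProductSpace.toDual ℝ (EuclideanSpace ℝ (Fin d)))
        ((Fintype.card ι : ℝ)⁻¹ • ∑ i, gradient (fS i) x)
        = (1 / (Fintype.card ι : ℝ)) • ∑ i, fderiv ℝ (fS i) x := by
      rw [_root_.map_smul, _root_.map_sum, one_div]
      congr 1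
      refine Finset.sum_congr rfl fun i _ => ?_
      exact LinearIsometryEquiv.apply_symm_apply _ _
    rw [this]
    exact hF
  exact hGr.gradient

/-- Recursion for the mean shift error in Byz-DASHA-PAGE. -/
theorem mean_shift_error_recursion_byz_dasha_page
    {d : ℕ} {ι : Type*} [Fintype ι]
    -- local loss functions and their average
    (fS : ι → EuclideanSpace ℝ (Fin d) → ℝ)
    (f : EuclideanSpace ℝ (Fin d) → ℝ)
    (hf : ∀ x, f x = (1 / (Fintype.card ι : ℝ)) * ∑ i, fS i x)
    (hdiff : ∀ i, Differentiable ℝ (fS i))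
    -- probability of full-gradient synchronization
    (p : ℝ) (hp0 : 0 < p) (hp1 : p ≤ 1)
    -- past randomness
    {Ω₀ : Type*} [MeasurableSpace Ω₀] (μ₀ : Measure Ω₀) [IsProbabilityMeasure μ₀]
    -- coin randomness (the same coin for all workers)
    (μc : Measure Bool) [IsProbabilityMeasure μc]
    (hcoin : μc {true} = ENNReal.ofReal p)
    -- mini-batch estimator randomness (independent across workers)
    {Ωb : ι → Type*} [∀ i, MeasurableSpace (Ωb i)]
    (νb : ∀ i, Measure (Ωb i)) [∀ i, IsProbabilityMeasure (νb i)]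
    -- mini-batch estimators: conditionally unbiased, local Hessian variance with batch size b
    (Dhat : (i : ι) → EuclideanSpace ℝ (Fin d) → EuclideanSpace ℝ (Fin d) →
      Ωb i → EuclideanSpace ℝ (Fin d))
    (hDmeas : ∀ i, Measurable fun q :
        (EuclideanSpace ℝ (Fin d) × EuclideanSpace ℝ (Fin d)) × Ωb i =>
        Dhat i q.1.1 q.1.2 q.2)
    (hDint : ∀ i x y, Integrable (fun wb => Dhat i x y wb) (νb i))
    (hDint2 : ∀ i x y, Integrable
      (fun wb => ‖Dhat i x y wb - (gradient (fS i) x - gradient (fS i) y)‖ ^ 2) (νb i))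
    (hDunbiased : ∀ i x y,
      ∫ wb, Dhat i x y wb ∂(νb i) = gradient (fS i) x - gradient (fS i) y)
    (b Lloc : ℝ) (hb : 0 < b) (hLloc : 0 ≤ Lloc)
    (hlocal : ∀ x y, (1 / (Fintype.card ι : ℝ)) *
        ∑ i, ∫ wb, ‖Dhat i x y wb - (gradient (fS i) x - gradient (fS i) y)‖ ^ 2 ∂(νb i)
      ≤ (Lloc ^ 2 / b) * ‖x - y‖ ^ 2)
    -- current iterates and shifts (measurable with respect to the past)
    (xt xt1 : Ω₀ → EuclideanSpace ℝ (Fin d))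
    (ht : ι → Ω₀ → EuclideanSpace ℝ (Fin d))
    (hxtm : Measurable xt) (hxt1m : Measurable xt1) (hhtm : ∀ i, Measurable (ht i))
    -- the new shifts: with probability p set to the full gradient,
    -- otherwise add a stochastic gradient difference
    (ht1 : ι → Ω₀ × Bool × (∀ i, Ωb i) → EuclideanSpace ℝ (Fin d))
    (hht1 : ∀ i w, ht1 i w =
      if w.2.1 then gradient (fS i) (xt1 w.1)
      else ht i w.1 + Dhat i (xt1 w.1) (xt w.1) (w.2.2 i))
    -- integrability of the relevant squared norms
    (hint1 : Integrable
      (fun w : Ω₀ × Bool × (∀ i, Ωb i) =>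
        ‖(Fintype.card ι : ℝ)⁻¹ • ∑ i, ht1 i w - gradient f (xt1 w.1)‖ ^ 2)
      (μ₀.prod (μc.prod (Measure.pi νb))))
    (hint2 : Integrable
      (fun ω₀ => ‖(Fintype.card ι : ℝ)⁻¹ • ∑ i, ht i ω₀ - gradient f (xt ω₀)‖ ^ 2) μ₀)
    (hint3 : Integrable (fun ω₀ => ‖xt1 ω₀ - xt ω₀‖ ^ 2) μ₀) :
    ∫ w, ‖(Fintype.card ι : ℝ)⁻¹ • ∑ i, ht1 i w - gradient f (xt1 w.1)‖ ^ 2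
        ∂(μ₀.prod (μc.prod (Measure.pi νb)))
      ≤ (1 - p) *
          ∫ ω₀, ‖(Fintype.card ι : ℝ)⁻¹ • ∑ i, ht i ω₀ - gradient f (xt ω₀)‖ ^ 2 ∂μ₀
        + ((1 - p) * Lloc ^ 2 / ((Fintype.card ι : ℝ) * b)) *
          ∫ ω₀, ‖xt1 ω₀ - xt ω₀‖ ^ 2 ∂μ₀ := by
  classical
  set G : ℝ := (Fintype.card ι : ℝ) with hG
  set π : Measure (∀ i, Ωb i) := Measure.pi νb with hπdef
  set F : Ω₀ × Bool × (∀ i, Ωb i) → ℝ :=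
    fun w => ‖G⁻¹ • ∑ i, ht1 i w - gradient f (xt1 w.1)‖ ^ 2 with hFdef
  have hgrad : ∀ x, gradient f x = G⁻¹ • ∑ i, gradient (fS i) x :=
    gradient_avg fS f hf hdiff
  -- coin measure decomposition
  have hfalse : μc {false} = 1 - ENNReal.ofReal p := by
    have hcompl : ({true} : Set Bool)ᶜ = {false} := by
      ext c; cases c <;> simp
    rw [← hcompl, measure_compl (measurableSet_singleton true) (measure_ne_top μc _),
      measure_univ, hcoin]
  have hμc : μc = ENNReal.ofReal p • Measure.dirac true
      + (1 - ENNReal.ofReal p) • Measure.dirac false := by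
    conv_lhs => rw [bool_meas_decomp μc]
    rw [hcoin, hfalse]
  -- embeddings
  have hemb : ∀ bb : Bool, MeasurableEmbedding
      (fun q : Ω₀ × (∀ i, Ωb i) => (q.1, (bb, q.2))) := fun bb =>
    MeasurableEmbedding.prodMap MeasurableEmbedding.id (measurableEmbedding_prodMk_left bb)
  have hmapb : ∀ bb : Bool, μ₀.prod ((Measure.dirac bb).prod π)
      = Measure.map (fun q : Ω₀ × (∀ i, Ωb i) => (q.1, (bb, q.2))) (μ₀.prod π) := by
    intro bb
    calc μ₀.prod ((Measure.dirac bb).prod π)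
        = (Measure.map id μ₀).prod (Measure.map (Prod.mk bb) π) := by
          rw [Measure.map_id, Measure.dirac_prod]
      _ = Measure.map (Prod.map id (Prod.mk bb)) (μ₀.prod π) :=
          Measure.map_prod_map _ _ measurable_id measurable_prodMk_left
      _ = Measure.map (fun q : Ω₀ × (∀ i, Ωb i) => (q.1, (bb, q.2))) (μ₀.prod π) := rfl
  -- total measure decomposition
  have htot : μ₀.prod (μc.prod π)
      = ENNReal.ofReal p •
          Measure.map (fun q : Ω₀ × (∀ i, Ωb i) => (q.1, (true, q.2))) (μ₀.prod π)
        + (1 - ENNReal.ofReal p) •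
          Measure.map (fun q : Ω₀ × (∀ i, Ωb i) => (q.1, (false, q.2))) (μ₀.prod π) := by
    conv_lhs => rw [hμc]
    rw [Measure.add_prod, smul_prod_left', smul_prod_left', Measure.prod_add,
      smul_prod_right', smul_prod_right', hmapb true, hmapb false]
  set A : Measure (Ω₀ × Bool × (∀ i, Ωb i)) :=
    Measure.map (fun q : Ω₀ × (∀ i, Ωb i) => (q.1, (true, q.2))) (μ₀.prod π) with hAdef
  set B : Measure (Ω₀ × Bool × (∀ i, Ωb i)) :=
    Measure.map (fun q : Ω₀ × (∀ i, Ωb i) => (q.1, (false, q.2))) (μ₀.prod π) with hBdef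
  have hintT : Integrable F (ENNReal.ofReal p • A) := by
    rw [htot] at hint1
    exact hint1.left_of_add_measure
  have hintF : Integrable F ((1 - ENNReal.ofReal p) • B) := by
    rw [htot] at hint1
    exact hint1.right_of_add_measure
  -- the true part vanishes
  have hTrue : ∫ q : Ω₀ × (∀ i, Ωb i), F (q.1, (true, q.2)) ∂(μ₀.prod π) = 0 := by
    have hz : ∀ q : Ω₀ × (∀ i, Ωb i), F (q.1, (true, q.2)) = 0 := by
      intro q
      simp only [hFdef, hht1, if_true, hgrad]
      simp
    simp only [hz, integral_zero]
  -- notation for the false part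
  set M : Ω₀ → EuclideanSpace ℝ (Fin d) :=
    fun ω => G⁻¹ • ∑ i, ht i ω - gradient f (xt ω) with hMdef
  set Z : Ω₀ → ∀ i, Ωb i → EuclideanSpace ℝ (Fin d) :=
    fun ω i u => G⁻¹ • (Dhat i (xt1 ω) (xt ω) u
      - (gradient (fS i) (xt1 ω) - gradient (fS i) (xt ω))) with hZdef
  have hFfalse : ∀ (ω : Ω₀) (wb : ∀ i, Ωb i),
      F (ω, (false, wb)) = ‖M ω + ∑ i, Z ω i (wb i)‖ ^ 2 := by
    intro ω wb
    have : G⁻¹ • ∑ i, ht1 i (ω, (false, wb)) - gradient f (xt1 (ω, (false, wb)).1)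
        = M ω + ∑ i, Z ω i (wb i) := by
      simp only [hht1, hZdef, hMdef]
      rw [hgrad (xt ω), hgrad (xt1 ω)]
      simp only [Bool.false_eq_true, if_false]
      rw [Finset.sum_add_distrib, smul_add]
      rw [show (∑ i, G⁻¹ • (Dhat i (xt1 ω) (xt ω) (wb i)
        - (gradient (fS i) (xt1 ω) - gradient (fS i) (xt ω))))
        = G⁻¹ • ∑ i, (Dhat i (xt1 ω) (xt ω) (wb i)
          - (gradient (fS i) (xt1 ω) - gradient (fS i) (xt ω))) from
        (Finset.smul_sum).symm]
      rw [Finset.sum_sub_distrib, Finset.sum_sub_distrib, smul_sub, smul_sub]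
      abel
    simp only [hFdef]
    rw [this]
  -- per-ω facts about Z
  have hZm : ∀ (ω : Ω₀) i, Measurable (Z ω i) := by
    intro ω i
    have h1 : Measurable fun u : Ωb i => Dhat i (xt1 ω) (xt ω) u :=
      (hDmeas i).comp
        (show Measurable fun u : Ωb i => (((xt1 ω), (xt ω)), u) from
          measurable_const.prodMk measurable_id)
    exact ((h1.sub measurable_const).const_smul G⁻¹)
  have hZ1 : ∀ (ω : Ω₀) i, Integrable (Z ω i) (νb i) := by
    intro ω i
    have := ((hDint i (xt1 ω) (xt ω)).sub (integrable_const
      (gradient (fS i) (xt1 ω) - gradient (fS i) (xt ω)))).smul (c := G⁻¹)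
    simp only [hZdef]
    exact this
  have hZ2 : ∀ (ω : Ω₀) i, Integrable (fun u => ‖Z ω i u‖ ^ 2) (νb i) := by
    intro ω i
    have h1 := (hDint2 i (xt1 ω) (xt ω)).const_mul ((G⁻¹) ^ 2)
    refine h1.congr ?_
    refine Filter.Eventually.of_forall fun u => ?_
    simp only [hZdef, norm_smul, Real.norm_eq_abs, mul_pow, sq_abs]
  have hZ0 : ∀ (ω : Ω₀) i, ∫ u, Z ω i u ∂(νb i) = 0 := by
    intro ω i
    simp only [hZdef]
    rw [integral_smul, integral_sub (hDint i (xt1 ω) (xt ω)) (integrable_const _),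
      hDunbiased i (xt1 ω) (xt ω), integral_const]
    simp
  -- variance bound for the false inner integral
  have hSumBound : ∀ ω : Ω₀, ∑ i, ∫ u, ‖Z ω i u‖ ^ 2 ∂(νb i)
      ≤ Lloc ^ 2 / (G * b) * ‖xt1 ω - xt ω‖ ^ 2 := by
    intro ω
    have hrw : ∀ i, ∫ u, ‖Z ω i u‖ ^ 2 ∂(νb i)
        = (G⁻¹) ^ 2 * ∫ u, ‖Dhat i (xt1 ω) (xt ω) u
            - (gradient (fS i) (xt1 ω) - gradient (fS i) (xt ω))‖ ^ 2 ∂(νb i) := by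
      intro i
      rw [← integral_const_mul]
      refine integral_congr_ae (Filter.Eventually.of_forall fun u => ?_)
      simp only [hZdef, norm_smul, Real.norm_eq_abs, mul_pow, sq_abs]
    simp only [hrw]
    rw [← Finset.mul_sum]
    by_cases hG0 : G = 0
    · simp [hG0]
    · have hGpos : 0 < G := lt_of_le_of_ne (Nat.cast_nonneg _) (Ne.symm hG0)
      have hl := hlocal (xt1 ω) (xt ω)
      have h2 : (G⁻¹) ^ 2 * ∑ i, ∫ u, ‖Dhat i (xt1 ω) (xt ω) u
            - (gradient (fS i) (xt1 ω) - gradient (fS i) (xt ω))‖ ^ 2 ∂(νb i)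
          = G⁻¹ * ((1 / G) * ∑ i, ∫ u, ‖Dhat i (xt1 ω) (xt ω) u
            - (gradient (fS i) (xt1 ω) - gradient (fS i) (xt ω))‖ ^ 2 ∂(νb i)) := by
        ring
      rw [h2]
      calc G⁻¹ * ((1 / G) * ∑ i, ∫ u, ‖Dhat i (xt1 ω) (xt ω) u
            - (gradient (fS i) (xt1 ω) - gradient (fS i) (xt ω))‖ ^ 2 ∂(νb i))
          ≤ G⁻¹ * ((Lloc ^ 2 / b) * ‖xt1 ω - xt ω‖ ^ 2) := by
            exact mul_le_mul_of_nonneg_left hl (by positivity)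
        _ = Lloc ^ 2 / (G * b) * ‖xt1 ω - xt ω‖ ^ 2 := by
            field_simp
  -- the inner integral over π for fixed ω
  have hInnerEq : ∀ ω : Ω₀, ∫ wb, F (ω, (false, wb)) ∂π
      = ‖M ω‖ ^ 2 + ∑ i, ∫ u, ‖Z ω i u‖ ^ 2 ∂(νb i) := by
    intro ω
    rw [show (fun wb => F (ω, (false, wb)))
      = fun wb : ∀ i, Ωb i => ‖M ω + ∑ i, Z ω i (wb i)‖ ^ 2 from
      funext fun wb => hFfalse ω wb]
    exact (pi_second_moment νb (Z ω) (hZm ω) (hZ1 ω) (hZ2 ω) (hZ0 ω) (M ω)).2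
  -- coefficients
  have hcT : (ENNReal.ofReal p).toReal = p := ENNReal.toReal_ofReal hp0.le
  have hcF : ((1 : ℝ≥0∞) - ENNReal.ofReal p).toReal = 1 - p := by
    rw [show (1 : ℝ≥0∞) - ENNReal.ofReal p = ENNReal.ofReal (1 - p) by
      rw [ENNReal.ofReal_sub _ hp0.le, ENNReal.ofReal_one]]
    exact ENNReal.toReal_ofReal (sub_nonneg.2 hp1)
  have h1p : (0 : ℝ) ≤ 1 - p := sub_nonneg.2 hp1
  -- main computation
  have hsplit : ∫ w, F w ∂(μ₀.prod (μc.prod π))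
      = p * ∫ q : Ω₀ × (∀ i, Ωb i), F (q.1, (true, q.2)) ∂(μ₀.prod π)
        + (1 - p) * ∫ q : Ω₀ × (∀ i, Ωb i), F (q.1, (false, q.2)) ∂(μ₀.prod π) := by
    calc ∫ w, F w ∂(μ₀.prod (μc.prod π))
        = ∫ w, F w ∂(ENNReal.ofReal p • A + (1 - ENNReal.ofReal p) • B) := by rw [← htot]
      _ = ∫ w, F w ∂(ENNReal.ofReal p • A) + ∫ w, F w ∂((1 - ENNReal.ofReal p) • B) :=
          integral_add_measure hintT hintF
      _ = (ENNReal.ofReal p).toReal * ∫ w, F w ∂A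
          + ((1 : ℝ≥0∞) - ENNReal.ofReal p).toReal * ∫ w, F w ∂B := by
          rw [integral_smul_measure, integral_smul_measure, smul_eq_mul, smul_eq_mul]
      _ = p * ∫ q : Ω₀ × (∀ i, Ωb i), F (q.1, (true, q.2)) ∂(μ₀.prod π)
          + (1 - p) * ∫ q : Ω₀ × (∀ i, Ωb i), F (q.1, (false, q.2)) ∂(μ₀.prod π) := by
          rw [hcT, hcF, hAdef, hBdef, (hemb true).integral_map, (hemb false).integral_map]
  rw [hsplit, hTrue, mul_zero, zero_add]
  -- bound the false part
  rcases eq_or_lt_of_le hp1 with hp1' | hp1'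
  · -- p = 1
    rw [← hp1']
    simp only [sub_self, zero_mul, zero_div, zero_add]
    exact le_of_eq (by ring)
  · -- p < 1
    have hcF0 : (1 : ℝ≥0∞) - ENNReal.ofReal p ≠ 0 := by
      have : ENNReal.ofReal p < 1 := by
        rw [← ENNReal.ofReal_one]
        exact (ENNReal.ofReal_lt_ofReal_iff one_pos).mpr hp1'
      exact (tsub_pos_of_lt this).ne'
    have hcFtop : (1 : ℝ≥0∞) - ENNReal.ofReal p ≠ ⊤ :=
      (tsub_le_self.trans_lt (by simp : (1 : ℝ≥0∞) < ⊤)).ne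
    have hBint : Integrable F B :=
      (integrable_smul_measure hcF0 hcFtop).mp hintF
    have hΦint : Integrable (fun q : Ω₀ × (∀ i, Ωb i) => F (q.1, (false, q.2))) (μ₀.prod π) :=
      ((hemb false).integrable_map_iff).mp hBint
    have hFub : ∫ q : Ω₀ × (∀ i, Ωb i), F (q.1, (false, q.2)) ∂(μ₀.prod π)
        = ∫ ω, ∫ wb, F (ω, (false, wb)) ∂π ∂μ₀ := by
      exact integral_prod _ hΦint
    rw [hFub]
    have hmajInt : Integrable
        (fun ω => ‖M ω‖ ^ 2 + Lloc ^ 2 / (G * b) * ‖xt1 ω - xt ω‖ ^ 2) μ₀ :=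
      hint2.add (hint3.const_mul _)
    have hinnerInt : Integrable (fun ω => ∫ wb, F (ω, (false, wb)) ∂π) μ₀ :=
      hΦint.integral_prod_left
    have hmono : ∫ ω, ∫ wb, F (ω, (false, wb)) ∂π ∂μ₀
        ≤ ∫ ω, (‖M ω‖ ^ 2 + Lloc ^ 2 / (G * b) * ‖xt1 ω - xt ω‖ ^ 2) ∂μ₀ := by
      refine integral_mono hinnerInt hmajInt fun ω => ?_
      rw [hInnerEq ω]
      exact add_le_add le_rfl (hSumBound ω)
    have hmajVal : ∫ ω, (‖M ω‖ ^ 2 + Lloc ^ 2 / (G * b) * ‖xt1 ω - xt ω‖ ^ 2) ∂μ₀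
        = (∫ ω, ‖M ω‖ ^ 2 ∂μ₀) + Lloc ^ 2 / (G * b) * ∫ ω, ‖xt1 ω - xt ω‖ ^ 2 ∂μ₀ := by
      rw [integral_add hint2 (hint3.const_mul _), integral_const_mul]
    calc (1 - p) * ∫ ω, ∫ wb, F (ω, (false, wb)) ∂π ∂μ₀
        ≤ (1 - p) * ((∫ ω, ‖M ω‖ ^ 2 ∂μ₀)
            + Lloc ^ 2 / (G * b) * ∫ ω, ‖xt1 ω - xt ω‖ ^ 2 ∂μ₀) := by
          refine mul_le_mul_of_nonneg_left ?_ h1p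
          rw [← hmajVal]
          exact hmono
      _ = (1 - p) * (∫ ω, ‖M ω‖ ^ 2 ∂μ₀)
          + (1 - p) * Lloc ^ 2 / (G * b) * ∫ ω, ‖xt1 ω - xt ω‖ ^ 2 ∂μ₀ := by ring
end
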